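/- arXiv:2106.16015 — 9 statements merged into one kernel-verified Lean document; each statement's English description precedes it below -/
import Mathlib

section
/- Let G be a 2-connected finite simple graph on vertex set V with |V| ≥ 3, and let S ⊆ V. Then G contains no odd S-cycle if and only if S = ∅ or G is bipartite. -/
open SimpleGraph

/-- A finite simple graph is 2-connected if it has at least 3 vertices, is connected,
and deleting any single vertex leaves a connected graph. -/
def TwoConnected {V : Type*} [Fintype V] (G : SimpleGraph V) : Prop :=
  3 ≤ Fintype.card V ∧ G.Connected ∧
    ∀ v : V, (G.induce {w : V | w ≠ v}).Connected

section Aux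

variable {V : Type*} {G : SimpleGraph V}

/-- Along any walk, a proper 2-coloring agrees on the endpoints iff the length is even. -/
lemma color_parity (C : G.Coloring (Fin 2)) {x y : V} (p : G.Walk x y) :
    C x = C y ↔ Even p.length := by
  induction p with
  | nil => simp
  | @cons x x' y h p ih =>
    have hne := C.valid h
    have h2 : ∀ a b c : Fin 2, a ≠ b → (a = c ↔ ¬ b = c) := by decide
    rw [Walk.length_cons, Nat.even_add_one, ← ih]
    exact h2 _ _ _ hne

/-- A path between `x` and `y` containing the edge `{x, y}` has length one. -/
lemma path_edge_length {x y : V} (p : G.Walk x y) (hp : p.IsPath)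
    (he : s(x, y) ∈ p.edges) : p.length = 1 := by
  cases p with
  | nil => simp at he
  | @cons _ x' _ h q =>
    rw [Walk.edges_cons, List.mem_cons] at he
    rcases he with he | he
    · rw [Sym2.eq_iff] at he
      rcases he with ⟨-, rfl⟩ | ⟨rfl, rfl⟩
      · cases q with
        | nil => simp
        | cons h' q' =>
          exfalso
          have := hp.support_nodup
          rw [Walk.support_cons, Walk.support_cons, List.nodup_cons, List.nodup_cons] at this
          exact this.2.1 q'.end_mem_support
      · exact absurd rfl h.ne
    · exfalso
      have hx : x ∈ q.support := Walk.fst_mem_support_of_mem_edges q he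
      rw [Walk.cons_isPath_iff] at hp
      exact hp.2 hx

lemma length_rotate [DecidableEq V] {x y : V} (c : G.Walk x x) (h : y ∈ c.support) :
    (c.rotate y h).length = c.length := by
  simp only [Walk.rotate, Walk.length_append]
  have := congrArg Walk.length (c.take_spec h)
  rw [Walk.length_append] at this
  omega

/-- An odd closed walk contains an odd cycle. -/
lemma exists_odd_cycle :
    ∀ n : ℕ, ∀ {a : V} (W : G.Walk a a), W.length ≤ n → Odd W.length →
      ∃ (b : V) (c : G.Walk b b), c.IsCycle ∧ Odd c.length := by
  classical
  intro n
  induction n with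
  | zero =>
    intro a W hW hodd
    rw [Nat.le_zero.mp hW] at hodd
    simp at hodd
  | succ n ih =>
    intro a W hW hodd
    by_cases hnd : W.support.tail.Nodup
    · cases W with
      | nil => simp at hodd
      | @cons _ b _ h W₁ =>
        rw [Walk.support_cons, List.tail_cons] at hnd
        have hpath : W₁.IsPath := (Walk.isPath_def _).mpr hnd
        by_cases he : s(a, b) ∈ W₁.edges
        · exfalso
          have h1 : W₁.length = 1 :=
            path_edge_length W₁ hpath (by rwa [Sym2.eq_swap])
          rw [Walk.length_cons, h1, Nat.odd_iff] at hodd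
          omega
        · exact ⟨a, Walk.cons h W₁, (Walk.cons_isCycle_iff _ h).mpr ⟨hpath, he⟩, hodd⟩
    · obtain ⟨x, hxdup⟩ := List.exists_duplicate_iff_not_nodup.mpr hnd
      have hcount : 2 ≤ W.support.tail.count x := List.duplicate_iff_two_le_count.mp hxdup
      have hxs : x ∈ W.support := by
        rw [W.support_eq_cons]
        exact List.mem_cons_of_mem _ (hxdup.mem)
      have hcount' : 2 ≤ (W.rotate x hxs).support.tail.count x := by
        rwa [((Walk.support_rotate W x hxs).perm.count_eq x)]
      have hlen' : (W.rotate x hxs).length = W.length := length_rotate W hxs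
      rcases hW' : W.rotate x hxs with _ | ⟨hadj, R⟩
      · rw [hW'] at hlen'
        rw [← hlen'] at hodd
        simp at hodd
      · rename_i y
        rw [hW'] at hcount' hlen'
        rw [Walk.support_cons, List.tail_cons] at hcount'
        have hxR : x ∈ R.support := by
          by_contra hx
          rw [List.count_eq_zero_of_not_mem hx] at hcount'
          omega
        set M := R.takeUntil x hxR with hM
        set N := R.dropUntil x hxR with hN
        have hspec : M.append N = R := R.take_spec hxR
        have hsup : R.support = M.support ++ N.support.tail := by
          rw [← hspec, Walk.support_append]
        have hcM : M.support.count x = 1 := R.count_support_takeUntil_eq_one hxR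
        have hcN : 1 ≤ N.support.tail.count x := by
          rw [hsup, List.count_append, hcM] at hcount'
          omega
        have hNlen : 1 ≤ N.length := by
          cases hN' : N with
          | nil =>
            rw [hN'] at hcN
            simp at hcN
          | cons h' q' => simp [hN', Walk.length_cons]
        have hlensum : (1 + M.length) + N.length = W.length := by
          have := congrArg Walk.length hspec
          rw [Walk.length_append] at this
          rw [← hlen', Walk.length_cons, ← this]
          omega
        have hWn : W.length ≤ n + 1 := hW
        by_cases hModd : Odd (1 + M.length)
        · exact ih (Walk.cons hadj M) (by rw [Walk.length_cons]; omega)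
            (by rw [Walk.length_cons, Nat.add_comm]; exact hModd)
        · have hN2 : Odd N.length := by
            rw [Nat.odd_iff] at hodd ⊢
            rw [Nat.odd_iff] at hModd
            omega
          exact ih N (by omega) hN2

/-- Splitting a cycle at a vertex different from its basepoint yields two paths. -/
lemma cycle_split [DecidableEq V] {u w : V} {c : G.Walk u u} (hc : c.IsCycle)
    (hw : w ∈ c.support) (hne : w ≠ u) :
    (c.takeUntil w hw).IsPath ∧ (c.dropUntil w hw).IsPath := by
  have hnd : c.support.tail.Nodup := hc.2
  have hspec : (c.takeUntil w hw).append (c.dropUntil w hw) = c := c.take_spec hw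
  set T := c.takeUntil w hw with hT
  set D := c.dropUntil w hw with hD
  have hsup : c.support = T.support ++ D.support.tail := by
    rw [← hspec, Walk.support_append]
  have htails : c.support.tail = T.support.tail ++ D.support.tail := by
    rw [← hspec, Walk.tail_support_append]
  rw [htails, List.nodup_append] at hnd
  obtain ⟨hT1, hD1, hdisj⟩ := hnd
  have hDne : D.support.tail ≠ [] := by
    intro hnil
    have : u ∈ D.support := D.end_mem_support
    rw [D.support_eq_cons, hnil] at this
    simp at this
    exact hne this.symm
  have huD : u ∈ D.support.tail := by
    have h0 : u ∈ D.support := D.end_mem_support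
    rw [D.support_eq_cons] at h0
    rcases List.mem_cons.mp h0 with h | h
    · exact absurd h.symm hne
    · exact h
  have hwT : w ∈ T.support.tail := by
    have h0 : w ∈ T.support := T.end_mem_support
    rw [T.support_eq_cons] at h0
    rcases List.mem_cons.mp h0 with h | h
    · exact absurd h hne
    · exact h
  constructor
  · rw [Walk.isPath_def, T.support_eq_cons, List.nodup_cons]
    exact ⟨fun hu => hdisj u hu u huD rfl, hT1⟩
  · rw [Walk.isPath_def, D.support_eq_cons, List.nodup_cons]
    exact ⟨fun hw' => hdisj w hwT w hw' rfl, hD1⟩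

/-- From a walk into a set `L` of vertices, extract an initial segment which meets `L`
exactly at its endpoint. -/
lemma exists_first_hit {L : List V} {u : V} :
    ∀ {v x : V} (q : G.Walk v x), v ∉ L → x ∈ L → u ∉ q.support →
      ∃ (w : V) (P : G.Walk v w), w ∈ L ∧ u ∉ P.support ∧
        ∀ z ∈ P.support, z ∈ L → z = w := by
  intro v x q
  induction q with
  | nil => exact fun hv hx _ => absurd hx hv
  | @cons v v' x h q ih =>
    intro hv hx hu
    rw [Walk.support_cons, List.mem_cons] at hu
    push_neg at hu
    by_cases hv' : v' ∈ L
    · refine ⟨v', Walk.cons h .nil, hv', ?_, ?_⟩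
      · rw [Walk.support_cons, Walk.support_nil]
        intro hmem
        rcases List.mem_cons.mp hmem with h1 | h1
        · exact hu.1 h1
        · rw [List.mem_singleton] at h1
          exact hu.2 (h1 ▸ q.start_mem_support)
      · intro z hz hzL
        rw [Walk.support_cons, Walk.support_nil] at hz
        rcases List.mem_cons.mp hz with rfl | hz
        · exact absurd hzL hv
        · rwa [List.mem_singleton] at hz
    · obtain ⟨w, P, h1, h2, h3⟩ := ih hv' hx hu.2
      refine ⟨w, Walk.cons h P, h1, ?_, ?_⟩
      · rw [Walk.support_cons, List.mem_cons]
        push_neg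
        exact ⟨hu.1, h2⟩
      · intro z hz hzL
        rw [Walk.support_cons] at hz
        rcases List.mem_cons.mp hz with rfl | hz
        · exact absurd hzL hv
        · exact h3 z hz hzL

/-- Key step: if `u` lies on an odd cycle and `v` is adjacent to `u`, then (using that
`G - u` is connected) `v` also lies on an odd cycle. -/
lemma mem_odd_cycle_of_adj [DecidableEq V]
    (hdel : ∀ v : V, (G.induce {w : V | w ≠ v}).Connected)
    {u v : V} (huv : G.Adj u v)
    (hu : ∃ (a : V) (c : G.Walk a a), c.IsCycle ∧ Odd c.length ∧ u ∈ c.support) :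
    ∃ (a : V) (c : G.Walk a a), c.IsCycle ∧ Odd c.length ∧ v ∈ c.support := by
  obtain ⟨a, c0, hc0, hodd0, hu0⟩ := hu
  have hcyc : (c0.rotate u hu0).IsCycle := hc0.rotate hu0
  have hCodd : Odd (c0.rotate u hu0).length := by
    rwa [length_rotate]
  set C := c0.rotate u hu0 with hCdef
  clear_value C
  clear hCdef hc0 hodd0 hu0 c0
  by_cases hvC : v ∈ C.support
  · exact ⟨u, C, hcyc, hCodd, hvC⟩
  -- second vertex of the cycle
  have hCnotnil : ¬ C.Nil := by
    rw [Walk.not_nil_iff_lt_length]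
    have := hcyc.three_le_length
    omega
  obtain ⟨y, hadjy, R, rfl⟩ := Walk.not_nil_iff.mp hCnotnil
  have hyC : y ∈ (Walk.cons hadjy R).support := by
    rw [Walk.support_cons]
    exact List.mem_cons_of_mem _ R.start_mem_support
  set C := Walk.cons hadjy R with hCdef
  clear_value C
  clear hCdef
  have hyu : y ≠ u := hadjy.ne'
  have hvu : v ≠ u := huv.ne'
  -- a walk from v to y in G - u
  obtain ⟨q0⟩ := (hdel u).preconnected ⟨v, hvu⟩ ⟨y, hyu⟩
  let q : G.Walk v y := q0.map (SimpleGraph.Embedding.induce {w : V | w ≠ u}).toHom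
  have huq : u ∉ q.support := by
    intro hq
    replace hq : u ∈ (q0.map (SimpleGraph.Embedding.induce {w : V | w ≠ u}).toHom).support := hq
    rw [Walk.support_map, List.mem_map] at hq
    obtain ⟨⟨z, hz⟩, -, hz2⟩ := hq
    exact hz hz2
  -- first hit of the cycle
  obtain ⟨w, P0, hwC, huP0, hP0⟩ := exists_first_hit q hvC hyC huq
  set P := P0.bypass with hPdef
  have hPpath : P.IsPath := P0.bypass_isPath
  have hPsub : P.support ⊆ P0.support := P0.support_bypass_subset
  have huP : u ∉ P.support := fun h => huP0 (hPsub h)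
  have hPC : ∀ z ∈ P.support, z ∈ C.support → z = w := fun z hz => hP0 z (hPsub hz)
  have hwu : w ≠ u := fun h => huP (h ▸ P.end_mem_support)
  have hvCP : v ∉ C.support := hvC
  -- split the cycle at w
  obtain ⟨hTpath, hDpath⟩ := cycle_split hcyc hwC hwu
  set T := C.takeUntil w hwC with hTdef
  set D := C.dropUntil w hwC with hDdef
  have hsplitlen : T.length + D.length = C.length := by
    have := congrArg Walk.length (C.take_spec hwC)
    rwa [Walk.length_append] at this
  -- choose the arc of the right parity
  obtain ⟨A, hApath, hAsub, hApar⟩ :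
      ∃ A : G.Walk w u, A.IsPath ∧ (∀ z ∈ A.support, z ∈ C.support) ∧
        Even (P.length + A.length) := by
    by_cases hE : Even (P.length + D.length)
    · exact ⟨D, hDpath, fun z hz => C.support_dropUntil_subset hwC hz, hE⟩
    · refine ⟨T.reverse, hTpath.reverse, ?_, ?_⟩
      · intro z hz
        rw [Walk.support_reverse, List.mem_reverse] at hz
        exact C.support_takeUntil_subset hwC hz
      · rw [Walk.length_reverse]
        rw [Nat.even_iff] at hE ⊢
        rw [Nat.odd_iff] at hCodd
        push_neg at hE
        rw [Nat.mod_two_ne_zero] at hE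
        omega
  -- assemble the new cycle
  have hPA : (P.append A).IsPath := by
    rw [Walk.isPath_def, Walk.support_append, List.nodup_append]
    have hAnd : A.support.Nodup := hApath.support_nodup
    rw [A.support_eq_cons, List.nodup_cons] at hAnd
    refine ⟨hPpath.support_nodup, hAnd.2, ?_⟩
    intro z hzP z' hzA hzz
    subst hzz
    have hzA' : z ∈ A.support := A.support_eq_cons ▸ List.mem_cons_of_mem _ hzA
    have : z = w := hPC z hzP (hAsub z hzA')
    exact hAnd.1 (this ▸ hzA)
  have hedge : s(u, v) ∉ (P.append A).edges := by
    rw [Walk.edges_append, List.mem_append]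
    rintro (h | h)
    · exact huP (Walk.fst_mem_support_of_mem_edges _ h)
    · exact hvCP (hAsub v (Walk.snd_mem_support_of_mem_edges _ h))
  refine ⟨u, Walk.cons huv (P.append A),
    (Walk.cons_isCycle_iff _ huv).mpr ⟨hPA, hedge⟩, ?_, ?_⟩
  · rw [Walk.length_cons, Walk.length_append]
    exact hApar.add_one
  · rw [Walk.support_cons]
    exact List.mem_cons_of_mem _ (P.append A).start_mem_support

end Aux

/-- A 2-connected graph on at least 3 vertices contains no odd `S`-cycle iff
`S = ∅` or `G` is bipartite (properly 2-colorable). -/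
theorem stmt2 {V : Type*} [Fintype V] (G : SimpleGraph V)
    (hG : TwoConnected G) (S : Set V) :
    (¬ ∃ (a : V) (c : G.Walk a a), c.IsCycle ∧ Odd c.length ∧ ∃ w ∈ S, w ∈ c.support) ↔
      (S = ∅ ∨ G.Colorable 2) := by
  classical
  obtain ⟨hcard, hconn, hdel⟩ := hG
  constructor
  · intro h
    by_cases hS : S = ∅
    · exact Or.inl hS
    right
    obtain ⟨s, hs⟩ := Set.nonempty_iff_ne_empty.mpr hS
    by_contra hcol
    -- Step 1: there is an odd closed walk
    have hocw : ∃ (x : V) (wk : G.Walk x x), Odd wk.length := by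
      by_contra hno
      push_neg at hno
      obtain ⟨r⟩ : Nonempty V := hconn.nonempty
      apply hcol
      let pfun : ∀ v : V, G.Walk r v := fun v => (hconn.preconnected r v).some
      refine ⟨Coloring.mk (fun v => ⟨(pfun v).length % 2, by omega⟩) ?_⟩
      intro v w hvw heq
      have hpar : (pfun v).length % 2 = (pfun w).length % 2 := by
        simpa [Fin.mk.injEq] using heq
      have hclosed : Odd ((pfun v).append (Walk.cons hvw (pfun w).reverse)).length := by
        rw [Walk.length_append, Walk.length_cons, Walk.length_reverse, Nat.odd_iff]
        omega
      exact hno r _ hclosed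
    obtain ⟨x, wk, hwk⟩ := hocw
    obtain ⟨b, c, hc, hcodd⟩ := exists_odd_cycle wk.length wk le_rfl hwk
    -- Step 2: propagate membership in an odd cycle along walks
    have hB : ∀ {p q : V} (_ : G.Walk p q),
        (∃ (a : V) (c' : G.Walk a a), c'.IsCycle ∧ Odd c'.length ∧ p ∈ c'.support) →
        (∃ (a : V) (c' : G.Walk a a), c'.IsCycle ∧ Odd c'.length ∧ q ∈ c'.support) := by
      intro p q wpq
      induction wpq with
      | nil => exact id
      | cons hadj w ih =>
        intro hp
        exact ih (mem_odd_cycle_of_adj hdel hadj hp)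
    obtain ⟨wk'⟩ := hconn.preconnected b s
    obtain ⟨a', c', h1, h2, h3⟩ :=
      hB wk' ⟨b, c, hc, hcodd, c.start_mem_support⟩
    exact h ⟨a', c', h1, h2, s, hs, h3⟩
  · rintro (rfl | hcol2) ⟨a, c, hcyc, hodd, w, hwS, hwc⟩
    · exact absurd hwS (Set.notMem_empty w)
    · obtain ⟨Col⟩ := hcol2
      have heven := (color_parity Col c).mp rfl
      rw [Nat.even_iff] at heven
      rw [Nat.odd_iff] at hodd
      omega
end

section
/- Let G be a finite simple graph, S a set of vertices of G, and let u and v be two distinct vertices joined by three pairwise internally vertex-disjoint paths P1, P2, P3 such that at least two of these paths contain a vertex of S. Then two of the three paths together form a cycle of even length containing a vertex of S. -/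
open SimpleGraph

lemma path_edge_aux {V : Type*} {G : SimpleGraph V} {u v : V} (huv : u ≠ v)
    {P : G.Walk u v} (hP : P.IsPath) (he : s(u, v) ∈ P.edges) :
    ∃ h : G.Adj u v, P = Walk.cons h Walk.nil := by
  cases P with
  | nil => simp at he
  | cons h p =>
    rename_i x
    rw [Walk.edges_cons, List.mem_cons] at he
    rw [Walk.cons_isPath_iff] at hP
    rcases he with he | he
    · have hx : x = v := by
        rw [Sym2.eq_iff] at he
        rcases he with ⟨-, h2⟩ | ⟨h1, h2⟩
        · exact h2.symm
        · exact absurd h2.symm huv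
      subst hx
      cases p with
      | nil => exact ⟨h, rfl⟩
      | cons h' q =>
        rw [Walk.cons_isPath_iff] at hP
        exact absurd q.end_mem_support hP.1.2
    · exact absurd (Walk.fst_mem_support_of_mem_edges p he) hP.2

lemma cycle_aux {V : Type*} {G : SimpleGraph V} {u v : V} (huv : u ≠ v)
    {P Q : G.Walk u v} (hP : P.IsPath) (hQ : Q.IsPath) (hne : P ≠ Q)
    (hint : ∀ w, w ∈ P.support → w ∈ Q.support → w = u ∨ w = v) :
    (P.append Q.reverse).IsCycle := by
  have huP : u ∉ P.support.tail := by
    have := hP.support_nodup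
    rw [P.support_eq_cons, List.nodup_cons] at this
    exact this.1
  have hvQ : v ∉ Q.reverse.support.tail := by
    have := hQ.reverse.support_nodup
    rw [Q.reverse.support_eq_cons, List.nodup_cons] at this
    exact this.1
  rw [Walk.isCycle_def]
  refine ⟨?_, ?_, ?_⟩
  · rw [Walk.isTrail_def, Walk.edges_append, List.nodup_append]
    refine ⟨hP.isTrail.edges_nodup, hQ.reverse.isTrail.edges_nodup, ?_⟩
    intro e heP e' heQ hee; subst hee
    rw [Walk.edges_reverse, List.mem_reverse] at heQ
    induction e with
    | _ x y =>
      have hxP := Walk.fst_mem_support_of_mem_edges P heP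
      have hyP := Walk.snd_mem_support_of_mem_edges P heP
      have hxQ := Walk.fst_mem_support_of_mem_edges Q heQ
      have hyQ := Walk.snd_mem_support_of_mem_edges Q heQ
      have hxy : x ≠ y := by
        have : G.Adj x y := P.adj_of_mem_edges heP
        exact this.ne
      have hx := hint x hxP hxQ
      have hy := hint y hyP hyQ
      have he : s(x, y) = s(u, v) := by
        rcases hx with rfl | rfl <;> rcases hy with rfl | rfl <;>
          first | exact absurd rfl hxy | rw [Sym2.eq_swap] | rfl
      rw [he] at heP heQ
      obtain ⟨h1, hP1⟩ := path_edge_aux huv hP heP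
      obtain ⟨h2, hQ1⟩ := path_edge_aux huv hQ heQ
      exact hne (hP1.trans hQ1.symm)
  · intro hnil
    have : (P.append Q.reverse).length = 0 := by rw [hnil]; rfl
    rw [Walk.length_append] at this
    exact huv (Walk.eq_of_length_eq_zero (Nat.eq_zero_of_add_eq_zero_right this))
  · have hsupp : (P.append Q.reverse).support.tail
        = P.support.tail ++ Q.reverse.support.tail := by
      rw [Walk.support_append, P.support_eq_cons]
      simp
    rw [hsupp, List.nodup_append]
    refine ⟨hP.support_nodup.tail, hQ.reverse.support_nodup.tail, ?_⟩
    intro w hwP w' hwQ hww; subst hww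
    have hw1 : w ∈ P.support := List.mem_of_mem_tail hwP
    have hw2 : w ∈ Q.support := by
      have := List.mem_of_mem_tail hwQ
      rwa [Walk.support_reverse, List.mem_reverse] at this
    rcases hint w hw1 hw2 with rfl | rfl
    · exact huP hwP
    · exact hvQ hwQ

/-- If two distinct vertices `u`, `v` are joined by three pairwise internally vertex-disjoint
(pairwise distinct) paths, at least two of which contain a vertex of `S`, then two of the
three paths together form an even cycle containing a vertex of `S`. -/
theorem stmt4 {V : Type*} [Fintype V] (G : SimpleGraph V) (S : Set V)
    {u v : V} (huv : u ≠ v) (P : Fin 3 → G.Walk u v)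
    (hpath : ∀ i, (P i).IsPath)
    (hdist : ∀ i j, i ≠ j → P i ≠ P j)
    (hint : ∀ i j, i ≠ j → ∀ w : V, w ∈ (P i).support → w ∈ (P j).support → w = u ∨ w = v)
    (hS : ∃ i j, i ≠ j ∧ (∃ w ∈ S, w ∈ (P i).support) ∧ (∃ w ∈ S, w ∈ (P j).support)) :
    ∃ i j, i ≠ j ∧ ((P i).append (P j).reverse).IsCycle ∧
      Even ((P i).append (P j).reverse).length ∧
      ∃ w ∈ S, w ∈ ((P i).append (P j).reverse).support := by
  obtain ⟨a, b, hab, ⟨wa, hwaS, hwa⟩, ⟨wb, hwbS, hwb⟩⟩ := hS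
  have key : ∃ i j : Fin 3, i ≠ j ∧ Even ((P i).length + (P j).length) := by
    rcases Nat.even_or_odd (P 0).length with h0 | h0 <;>
      rcases Nat.even_or_odd (P 1).length with h1 | h1 <;>
        rcases Nat.even_or_odd (P 2).length with h2 | h2
    · exact ⟨0, 1, by decide, h0.add h1⟩
    · exact ⟨0, 1, by decide, h0.add h1⟩
    · exact ⟨0, 2, by decide, h0.add h2⟩
    · exact ⟨1, 2, by decide, h1.add_odd h2⟩
    · exact ⟨1, 2, by decide, h1.add h2⟩
    · exact ⟨0, 2, by decide, h0.add_odd h2⟩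
    · exact ⟨0, 1, by decide, h0.add_odd h1⟩
    · exact ⟨0, 1, by decide, h0.add_odd h1⟩
  obtain ⟨i, j, hij, heven⟩ := key
  refine ⟨i, j, hij,
    cycle_aux huv (hpath i) (hpath j) (hdist i j hij) (hint i j hij), ?_, ?_⟩
  · rwa [Walk.length_append, Walk.length_reverse]
  · have hfact : ∀ a b i j : Fin 3, a ≠ b → i ≠ j → i = a ∨ i = b ∨ j = a ∨ j = b := by
      decide
    have hmem := hfact a b i j hab hij
    have hL : ∀ w, w ∈ (P i).support → w ∈ ((P i).append (P j).reverse).support := by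
      intro w hw
      rw [Walk.mem_support_append_iff]; exact Or.inl hw
    have hR : ∀ w, w ∈ (P j).support → w ∈ ((P i).append (P j).reverse).support := by
      intro w hw
      rw [Walk.mem_support_append_iff, Walk.support_reverse, List.mem_reverse]
      exact Or.inr hw
    rcases hmem with rfl | rfl | rfl | rfl
    · exact ⟨wa, hwaS, hL wa hwa⟩
    · exact ⟨wb, hwbS, hL wb hwb⟩
    · exact ⟨wa, hwaS, hR wa hwa⟩
    · exact ⟨wb, hwbS, hR wb hwb⟩
end

section
/- Let G be a finite simple graph and say that two edges e and f of G lie in a common block if e = f or some cycle of G contains both e and f. Let W be a closed walk in G, with edge sequence e_1, e_2, …, e_m (indices taken cyclically), such that for every vertex v of G there is at most one cyclic index i for which e_i and e_{i+1} meet at v and do not lie in a common block. Then all edges of W pairwise lie in a common block. -/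
open SimpleGraph List

/-- Two edges `e` and `f` of `G` lie in a common block if `e = f` or some cycle of `G`
contains both. -/
def InCommonBlock {V : Type*} (G : SimpleGraph V) (e f : Sym2 V) : Prop :=
  e = f ∨ ∃ (a : V) (c : G.Walk a a), c.IsCycle ∧ e ∈ c.edges ∧ f ∈ c.edges

section Aux

variable {V : Type*} {G : SimpleGraph V}

lemma head_eq_of_eq {α : Type*} {l₁ l₂ : List α} (h : l₁ = l₂) (h₁ : l₁ ≠ []) :
    l₁.head h₁ = l₂.head (h ▸ h₁) := by subst h; rfl

lemma firstEdge_mem {u v : V} (p : G.Walk u v) (he : p.edges ≠ []) : u ∈ p.edges.head he := by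
  cases p with
  | nil => simp at he
  | cons h p => simp

lemma lastEdge_mem {u v : V} (p : G.Walk u v) (he : p.edges ≠ []) : v ∈ p.edges.getLast he := by
  have h2 : p.reverse.edges ≠ [] := by simpa [Walk.edges_reverse] using he
  have := firstEdge_mem p.reverse h2
  rwa [head_eq_of_eq (Walk.edges_reverse p), ← List.getLast_eq_head_reverse] at this

lemma head_eq_of_eq' {α : Type*} {l₁ l₂ : List α} (h : l₁ = l₂) (h₁ : l₁ ≠ []) :
    l₁.head h₁ = l₂.head (h ▸ h₁) := by subst h; rfl

lemma getLast_eq_of_eq' {α : Type*} {l₁ l₂ : List α} (h : l₁ = l₂) (h₁ : l₁ ≠ []) :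
    l₁.getLast h₁ = l₂.getLast (h ▸ h₁) := by subst h; rfl

lemma get_eq_of_eq' {α : Type*} {l₁ l₂ : List α} (h : l₁ = l₂) (i : Fin l₁.length) :
    l₁.get i = l₂.get ⟨(i : ℕ), h ▸ i.isLt⟩ := by subst h; rfl

lemma head_eq_get' {α : Type*} (l : List α) (h : l ≠ []) (h2 : 0 < l.length) :
    l.head h = l.get ⟨0, h2⟩ := by cases l with
  | nil => simp at h
  | cons x l => rfl

lemma icb_refl (e : Sym2 V) : InCommonBlock G e e := Or.inl rfl

lemma icb_symm {e f : Sym2 V} (h : InCommonBlock G e f) : InCommonBlock G f e := by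
  rcases h with h | ⟨a, c, hc, he, hf⟩
  · exact Or.inl h.symm
  · exact Or.inr ⟨a, c, hc, hf, he⟩

lemma icb_of_avoid [DecidableEq V] {v a b : V} (h : G.Adj v a) (r : G.Walk a b) (h' : G.Adj b v)
    (hv : v ∉ r.support) : InCommonBlock G s(v, a) s(b, v) := by
  by_cases hab : a = b
  · subst hab
    exact Or.inl (Sym2.eq_swap)
  · set r' := r.bypass with hr'
    have hr'path : r'.IsPath := r.bypass_isPath
    have hvr' : v ∉ r'.support := fun hm => hv (r.support_bypass_subset hm)
    have hQpath : (r'.concat h').IsPath := by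
      rw [Walk.isPath_def, Walk.support_concat]
      rw [← List.concat_eq_append]; exact List.Nodup.concat hvr' hr'path.support_nodup
    have hne : s(v, a) ∉ (r'.concat h').edges := by
      rw [Walk.edges_concat]
      intro hmem
      rcases (by simpa [List.concat_eq_append] using hmem :
          s(v, a) ∈ r'.edges ∨ v = b ∧ a = v ∨ a = b) with hm | ⟨-, hav⟩ | hab'
      · exact hvr' (Walk.fst_mem_support_of_mem_edges r' hm)
      · exact h.ne hav.symm
      · exact hab hab'
    refine Or.inr ⟨v, Walk.cons h (r'.concat h'), ?_, ?_, ?_⟩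
    · exact (Walk.cons_isCycle_iff _ _).mpr ⟨hQpath, hne⟩
    · simp
    · rw [Walk.edges_cons, Walk.edges_concat]
      simp

lemma end_mem_support_tail {a c : V} (p : G.Walk a c) (hp : ¬ p.Nil) :
    c ∈ p.support.tail := by
  cases p with
  | nil => simp at hp
  | cons h r => simpa using r.end_mem_support

lemma splitAtFirstSet (S : Set V) :
    ∀ {x y : V} (p : G.Walk x y), (∃ v ∈ p.support, v ∈ S) →
    ∃ (z : V) (p₁ : G.Walk x z) (p₂ : G.Walk z y), z ∈ S ∧ p = p₁.append p₂ ∧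
      ∀ v ∈ p₁.support, v ∈ S → v = z := by
  intro x y p
  induction p with
  | nil =>
    rintro ⟨v, hv, hvS⟩
    rw [Walk.support_nil, List.mem_singleton] at hv
    subst hv
    exact ⟨v, Walk.nil, Walk.nil, hvS, by simp, by simp⟩
  | @cons x c y h q ih =>
    intro hex
    by_cases hxS : x ∈ S
    · exact ⟨x, Walk.nil, Walk.cons h q, hxS, by simp, by simp⟩
    · have hex' : ∃ v ∈ q.support, v ∈ S := by
        obtain ⟨v, hv, hvS⟩ := hex
        rw [Walk.support_cons, List.mem_cons] at hv
        rcases hv with rfl | hv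
        · exact absurd hvS hxS
        · exact ⟨v, hv, hvS⟩
      obtain ⟨z, q₁, q₂, hzS, hsplit, hfirst⟩ := ih hex'
      refine ⟨z, Walk.cons h q₁, q₂, hzS, by rw [Walk.cons_append, ← hsplit], ?_⟩
      intro v hv hvS
      rw [Walk.support_cons, List.mem_cons] at hv
      rcases hv with rfl | hv
      · exact absurd hvS hxS
      · exact hfirst v hv hvS

lemma eq_concat' {u v : V} (p : G.Walk u v) (hp : ¬ p.Nil) :
    ∃ (x : V) (q : G.Walk u x) (h : G.Adj x v), p = q.concat h := by
  cases p with
  | nil => simp at hp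
  | cons h p => exact Walk.exists_cons_eq_concat h p

lemma path_last_edge_split {b u w : V} (p : G.Walk b u) (hp : p.IsPath)
    (he : s(u, w) ∈ p.edges) : ∃ (r : G.Walk b w) (h' : G.Adj w u), p = r.concat h' := by
  have hnn : ¬ p.Nil := by
    intro hn
    rw [Walk.nil_iff_length_eq] at hn
    have := p.length_edges
    rw [hn] at this
    exact absurd (List.length_eq_zero_iff.mp this ▸ he) List.not_mem_nil
  obtain ⟨x, q, h', rfl⟩ := eq_concat' p hnn
  have hnodup := hp.support_nodup
  rw [Walk.support_concat] at hnodup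
  have hu_not : u ∉ q.support := by
    have := (List.nodup_append'.mp hnodup).2.2
    intro hm
    exact this hm (List.mem_singleton_self u)
  have hq : s(u, w) ∉ q.edges := fun hm =>
    hu_not (Walk.fst_mem_support_of_mem_edges q hm)
  rw [Walk.edges_concat, List.concat_eq_append, List.mem_append] at he
  rcases he with he | he
  · exact absurd he hq
  · rw [List.mem_singleton] at he
    rcases Sym2.eq_iff.mp he with ⟨h1, h2⟩ | ⟨-, h2⟩
    · exact absurd h1.symm h'.ne
    · subst h2
      exact ⟨q, h', rfl⟩

lemma cycle_edge_split {u w : V} (c : G.Walk u u) (hc : c.IsCycle)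
    (hg : s(u, w) ∈ c.edges) :
    ∃ (h : G.Adj u w) (Q : G.Walk w u), Q.IsPath ∧ s(u, w) ∉ Q.edges ∧
      ∀ e' ∈ c.edges, e' = s(u, w) ∨ e' ∈ Q.edges := by
  cases c with
  | nil => simp at hg
  | @cons _ b _ hadj q =>
    obtain ⟨hq, hnb⟩ := (Walk.cons_isCycle_iff q hadj).mp hc
    rw [Walk.edges_cons, List.mem_cons] at hg
    rcases hg with hg | hg
    · -- s(u,w) is the first edge
      have hwb : w = b := by
        rcases Sym2.eq_iff.mp hg with ⟨-, h2⟩ | ⟨h1, -⟩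
        · exact h2
        · exact absurd h1 hadj.ne
      subst hwb
      exact ⟨hadj, q, hq, hnb, fun e' he' => by
        rw [Walk.edges_cons, List.mem_cons] at he'
        rcases he' with rfl | he'
        · exact Or.inl rfl
        · exact Or.inr he'⟩
    · -- s(u,w) is in q, hence is the last edge of q
      obtain ⟨r, h', rfl⟩ := path_last_edge_split q hq (by rwa [Sym2.eq_swap] at hg ⊢ <;> exact hg)
      have hur : u ∉ r.support := by
        have := hq.support_nodup
        rw [Walk.support_concat, List.nodup_append'] at this
        exact fun hm => this.2.2 hm (List.mem_singleton_self u)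
      have hconspath : (Walk.cons hadj r).IsPath := by
        rw [Walk.cons_isPath_iff]
        refine ⟨?_, hur⟩
        have := hq
        rw [Walk.concat_eq_append] at this
        exact this.of_append_left
      refine ⟨h'.symm, (Walk.cons hadj r).reverse, hconspath.reverse, ?_, ?_⟩
      · rw [Walk.edges_reverse, List.mem_reverse, Walk.edges_cons, List.mem_cons]
        rintro (huw | huw)
        · -- s(u,w) = s(u,b): but s(u,b) ∉ q.edges while s(u,w) ∈ q.edges
          exact hnb (huw ▸ hg)
        · -- s(u,w) ∈ r.edges: then u ∈ r.support
          exact hur (Walk.fst_mem_support_of_mem_edges r huw)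
      · intro e' he'
        rw [Walk.edges_cons, Walk.edges_concat, List.concat_eq_append] at he'
        rw [Walk.edges_reverse, List.mem_reverse, Walk.edges_cons]
        rcases List.mem_cons.mp he' with rfl | he'
        · exact Or.inr List.mem_cons_self
        · rcases List.mem_append.mp he' with he' | he'
          · exact Or.inr (List.mem_cons_of_mem _ he')
          · rw [List.mem_singleton] at he'
            exact Or.inl (he' ▸ Sym2.eq_swap ▸ rfl)

lemma cycle_arc_base [DecidableEq V] {z₁ z₂ : V} (c : G.Walk z₁ z₁) (hc : c.IsCycle)
    {e : Sym2 V} (he : e ∈ c.edges) (h₂ : z₂ ∈ c.support) (hne : z₁ ≠ z₂) :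
    ∃ Arc : G.Walk z₁ z₂, Arc.IsPath ∧ e ∈ Arc.edges ∧
      (∀ v ∈ Arc.support, v ∈ c.support) ∧ (∀ e' ∈ Arc.edges, e' ∈ c.edges) := by
  cases c with
  | nil => simp at he
  | @cons _ b _ hadj q =>
    obtain ⟨hq, hnb⟩ := (Walk.cons_isCycle_iff q hadj).mp hc
    have hz₂q : z₂ ∈ q.support := by
      rw [Walk.support_cons, List.mem_cons] at h₂
      rcases h₂ with rfl | h₂
      · exact absurd rfl hne
      · exact h₂
    have hsplit := q.take_spec hz₂q
    have htakepath : (q.takeUntil z₂ hz₂q).IsPath := hq.takeUntil hz₂q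
    have hdroppath : (q.dropUntil z₂ hz₂q).IsPath := hq.dropUntil hz₂q
    have hz₁take : z₁ ∉ (q.takeUntil z₂ hz₂q).support := by
      intro hmem
      have hdropnn : ¬ (q.dropUntil z₂ hz₂q).Nil := by
        intro hn
        rw [Walk.nil_iff_support_eq] at hn
        have := q.end_mem_support  -- z₁ ∈ q.support
        -- z₁ is the end of dropUntil; if dropUntil is nil then z₂ = z₁
        have : z₁ ∈ (q.dropUntil z₂ hz₂q).support := Walk.end_mem_support _
        rw [hn, List.mem_singleton] at this
        exact hne this
      have h1 : z₁ ∈ (q.dropUntil z₂ hz₂q).support.tail :=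
        end_mem_support_tail _ hdropnn
      have hnodup := hq.support_nodup
      rw [← hsplit, Walk.support_append, List.nodup_append'] at hnodup
      exact hnodup.2.2 hmem h1
    have hedges : q.edges = (q.takeUntil z₂ hz₂q).edges ++ (q.dropUntil z₂ hz₂q).edges := by
      conv_lhs => rw [← hsplit]
      rw [Walk.edges_append]
    rw [Walk.edges_cons, List.mem_cons] at he
    have hcase : (e = s(z₁, b) ∨ e ∈ (q.takeUntil z₂ hz₂q).edges) ∨
        e ∈ (q.dropUntil z₂ hz₂q).edges := by
      rcases he with he | he
      · exact Or.inl (Or.inl he)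
      · rw [hedges, List.mem_append] at he
        rcases he with he | he
        · exact Or.inl (Or.inr he)
        · exact Or.inr he
    rcases hcase with he' | he'
    · refine ⟨Walk.cons hadj (q.takeUntil z₂ hz₂q), ?_, ?_, ?_, ?_⟩
      · rw [Walk.cons_isPath_iff]; exact ⟨htakepath, hz₁take⟩
      · rw [Walk.edges_cons, List.mem_cons]; exact he'
      · intro v hv
        rw [Walk.support_cons, List.mem_cons] at hv
        rw [Walk.support_cons, List.mem_cons]
        rcases hv with rfl | hv
        · exact Or.inl rfl
        · exact Or.inr (q.support_takeUntil_subset hz₂q hv)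
      · intro e' he''
        rw [Walk.edges_cons, List.mem_cons] at he''
        rw [Walk.edges_cons, List.mem_cons]
        rcases he'' with rfl | he''
        · exact Or.inl rfl
        · exact Or.inr (q.edges_takeUntil_subset hz₂q he'')
    · refine ⟨(q.dropUntil z₂ hz₂q).reverse, hdroppath.reverse, ?_, ?_, ?_⟩
      · rw [Walk.edges_reverse, List.mem_reverse]; exact he'
      · intro v hv
        rw [Walk.support_reverse, List.mem_reverse] at hv
        rw [Walk.support_cons, List.mem_cons]
        exact Or.inr (q.support_dropUntil_subset hz₂q hv)
      · intro e' he''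
        rw [Walk.edges_reverse, List.mem_reverse] at he''
        rw [Walk.edges_cons, List.mem_cons]
        exact Or.inr (q.edges_dropUntil_subset hz₂q he'')

lemma mem_support_tail_of_closed {x : V} (c : G.Walk x x) (hnn : ¬ c.Nil) {z : V}
    (hz : z ∈ c.support) : z ∈ c.support.tail := by
  rw [Walk.mem_support_iff] at hz
  rcases hz with rfl | hz
  · exact end_mem_support_tail c hnn
  · exact hz

lemma cycle_arc [DecidableEq V] {x z₁ z₂ : V} (c : G.Walk x x) (hc : c.IsCycle)
    {e : Sym2 V} (he : e ∈ c.edges) (h₁ : z₁ ∈ c.support) (h₂ : z₂ ∈ c.support)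
    (hne : z₁ ≠ z₂) :
    ∃ Arc : G.Walk z₁ z₂, Arc.IsPath ∧ e ∈ Arc.edges ∧
      (∀ v ∈ Arc.support, v ∈ c.support) ∧ (∀ e' ∈ Arc.edges, e' ∈ c.edges) := by
  have hnn : ¬ c.Nil := hc.not_nil
  set c' := c.rotate z₁ h₁ with hc'def
  have hc' : c'.IsCycle := hc.rotate h₁
  have hrot_sup := c.support_rotate z₁ h₁   -- (c.rotate h₁).support.tail ~r c.support.tail
  have hmem_sup : ∀ v, v ∈ c'.support ↔ v ∈ c.support := by
    intro v
    constructor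
    · intro hv
      rw [Walk.mem_support_iff] at hv
      rcases hv with rfl | hv
      · exact h₁
      · exact List.tail_subset _ (hrot_sup.mem_iff.mp hv)
    · intro hv
      have := mem_support_tail_of_closed c hnn hv
      exact List.tail_subset _ (hrot_sup.mem_iff.mpr this)
  have hmem_edge : ∀ e', e' ∈ c'.edges ↔ e' ∈ c.edges := fun e' =>
    (c.rotate_edges z₁ h₁).mem_iff
  obtain ⟨Arc, hp, hmem, hsup, hedg⟩ := cycle_arc_base c' hc' ((hmem_edge e).mpr he)
    ((hmem_sup z₂).mpr h₂) hne
  exact ⟨Arc, hp, hmem, fun v hv => (hmem_sup v).mp (hsup v hv),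
    fun e' he' => (hmem_edge e').mp (hedg e' he')⟩

lemma sym2_repr (z : Sym2 V) : ∃ a b, z = s(a, b) := Sym2.ind (fun a b => ⟨a, b, rfl⟩) z

lemma icb_trans {e f g : Sym2 V} (hef : InCommonBlock G e f) (hfg : InCommonBlock G f g) :
    InCommonBlock G e g := by
  classical
  rcases hef with rfl | ⟨x, c₁, hc₁, he₁, hf₁⟩
  · exact hfg
  rcases hfg with rfl | ⟨y, c₂, hc₂, hf₂, hg₂⟩
  · exact Or.inr ⟨x, c₁, hc₁, he₁, hf₁⟩
  by_cases heg : e = g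
  · exact Or.inl heg
  by_cases hgc₁ : g ∈ c₁.edges
  · exact Or.inr ⟨x, c₁, hc₁, he₁, hgc₁⟩
  by_cases hfgeq : f = g
  · exact absurd (hfgeq ▸ hf₁) hgc₁
  -- decompose g
  obtain ⟨u, w, rfl⟩ := sym2_repr g
  have hu₂ : u ∈ c₂.support := Walk.fst_mem_support_of_mem_edges c₂ hg₂
  set c₂' := c₂.rotate u hu₂ with hc₂'def
  have hc₂'cyc : c₂'.IsCycle := hc₂.rotate hu₂
  have hedge₂' : ∀ e', e' ∈ c₂'.edges ↔ e' ∈ c₂.edges := fun e' => (c₂.rotate_edges u hu₂).mem_iff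
  obtain ⟨huw, Q, hQpath, hgQ, hQcover⟩ :=
    cycle_edge_split c₂' hc₂'cyc ((hedge₂' _).mpr hg₂)
  have hfQ : s(u, w) ≠ f → f ∈ Q.edges := by
    intro hne
    rcases hQcover f ((hedge₂' f).mpr hf₂) with h | h
    · exact absurd h.symm hne
    · exact h
  have hfQ : f ∈ Q.edges := hfQ (fun h => hfgeq h.symm)
  -- decompose f
  obtain ⟨fx, fy, rfl⟩ := sym2_repr f
  have hfxy : fx ≠ fy := (Walk.adj_of_mem_edges Q hfQ).ne
  have hfx₁ : fx ∈ c₁.support := Walk.fst_mem_support_of_mem_edges c₁ hf₁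
  have hfy₁ : fy ∈ c₁.support := Walk.snd_mem_support_of_mem_edges c₁ hf₁
  have hfxQ : fx ∈ Q.support := Walk.fst_mem_support_of_mem_edges Q hfQ
  set S : Set V := {v | v ∈ c₁.support} with hSdef
  -- first split from the w-side
  obtain ⟨z₁, A, D, hz₁S, hQsplit, hAfirst⟩ := splitAtFirstSet S Q ⟨fx, hfxQ, hfx₁⟩
  have hApath : A.IsPath := by rw [hQsplit] at hQpath; exact hQpath.of_append_left
  have hDpath : D.IsPath := by rw [hQsplit] at hQpath; exact hQpath.of_append_right
  have hfA : s(fx, fy) ∉ A.edges := by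
    intro hm
    have h1 := hAfirst fx (Walk.fst_mem_support_of_mem_edges A hm) hfx₁
    have h2 := hAfirst fy (Walk.snd_mem_support_of_mem_edges A hm) hfy₁
    exact hfxy (h1.trans h2.symm)
  have hfD : s(fx, fy) ∈ D.edges := by
    have : Q.edges = A.edges ++ D.edges := by rw [hQsplit, Walk.edges_append]
    rcases List.mem_append.mp (this ▸ hfQ) with h | h
    · exact absurd h hfA
    · exact h
  -- second split from the u-side
  have hfxD : fx ∈ D.reverse.support := by
    rw [Walk.support_reverse, List.mem_reverse]
    exact Walk.fst_mem_support_of_mem_edges D hfD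
  obtain ⟨z₂, C, E, hz₂S, hDsplit, hCfirst⟩ := splitAtFirstSet S D.reverse ⟨fx, hfxD, hfx₁⟩
  have hDrevpath : D.reverse.IsPath := hDpath.reverse
  have hCpath : C.IsPath := by rw [hDsplit] at hDrevpath; exact hDrevpath.of_append_left
  have hEpath : E.IsPath := by
    have := hDpath.reverse; rw [hDsplit] at this; exact this.of_append_right
  have hfC : s(fx, fy) ∉ C.edges := by
    intro hm
    have h1 := hCfirst fx (Walk.fst_mem_support_of_mem_edges C hm) hfx₁
    have h2 := hCfirst fy (Walk.snd_mem_support_of_mem_edges C hm) hfy₁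
    exact hfxy (h1.trans h2.symm)
  have hz₁₂ : z₁ ≠ z₂ := by
    intro hz
    subst hz
    have hfDrev : s(fx, fy) ∈ D.reverse.edges := by
      rw [Walk.edges_reverse, List.mem_reverse]; exact hfD
    have : D.reverse.edges = C.edges ++ E.edges := by rw [hDsplit, Walk.edges_append]
    rcases List.mem_append.mp (this ▸ hfDrev) with h | h
    · exact absurd h hfC
    · have : E = Walk.nil := (Walk.isPath_iff_eq_nil (p := E)) |>.mp hEpath
      rw [this] at h
      simp at h
  -- the arc of c₁ from z₁ to z₂ through e
  obtain ⟨Arc, hArcpath, heArc, hArcsup, hArcedg⟩ :=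
    cycle_arc c₁ hc₁ he₁ hz₁S hz₂S hz₁₂
  -- assemble the cycle
  set M : G.Walk w u := A.append (Arc.append C.reverse) with hMdef
  -- support disjointness facts
  have hz₁Arc : z₁ ∉ Arc.support.tail := by
    have := hArcpath.support_nodup
    rw [Arc.support_eq_cons, List.nodup_cons] at this
    exact this.1
  have hz₂Crev : z₂ ∉ C.reverse.support.tail := by
    have := hCpath.reverse.support_nodup
    rw [C.reverse.support_eq_cons, List.nodup_cons] at this
    exact this.1
  have hCsubD : ∀ v ∈ C.support, v ∈ D.support := by
    intro v hv
    have : v ∈ D.reverse.support := by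
      rw [hDsplit, Walk.mem_support_append_iff]; exact Or.inl hv
    rwa [Walk.support_reverse, List.mem_reverse] at this
  have hADdisj : ∀ v ∈ A.support, v ∈ D.support → v = z₁ := by
    intro v hvA hvD
    have hnodup := hQpath.support_nodup
    rw [hQsplit, Walk.support_append, List.nodup_append'] at hnodup
    rcases (Walk.mem_support_iff D).mp hvD with rfl | hvD'
    · rfl
    · exact absurd hvD' (fun h => hnodup.2.2 hvA h)
  have hAC : ∀ v ∈ A.support, v ∉ C.support := by
    intro v hvA hvC
    have hvz₁ : v = z₁ := hADdisj v hvA (hCsubD v hvC)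
    subst hvz₁
    have : v = z₂ := hCfirst v hvC hz₁S
    exact hz₁₂ this
  have hMsupport : M.support = A.support ++ (Arc.support.tail ++ C.reverse.support.tail) := by
    rw [hMdef, Walk.support_append, Walk.support_append, Arc.support_eq_cons]
    simp
  have hMpath : M.IsPath := by
    rw [Walk.isPath_def, hMsupport]
    refine List.Nodup.append hApath.support_nodup (List.Nodup.append ?_ ?_ ?_) ?_
    · exact hArcpath.support_nodup.tail
    · exact (hCpath.reverse.support_nodup).tail
    · -- Arc.tail vs C.rev.tail
      rw [List.disjoint_left]
      intro v hv₁ hv₂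
      have hvS : v ∈ S := hArcsup v (List.tail_subset _ hv₁)
      have hvC : v ∈ C.support := by
        have : v ∈ C.reverse.support := List.tail_subset _ hv₂
        rwa [Walk.support_reverse, List.mem_reverse] at this
      have : v = z₂ := hCfirst v hvC hvS
      subst this
      exact hz₂Crev hv₂
    · -- A vs rest
      rw [List.disjoint_left]
      intro v hvA hv
      rcases List.mem_append.mp hv with hv | hv
      · have hvS : v ∈ S := hArcsup v (List.tail_subset _ hv)
        have : v = z₁ := hAfirst v hvA hvS
        subst this
        exact hz₁Arc hv
      · have hvC : v ∈ C.support := by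
          have : v ∈ C.reverse.support := List.tail_subset _ hv
          rwa [Walk.support_reverse, List.mem_reverse] at this
        exact hAC v hvA hvC
  have hgM : s(u, w) ∉ M.edges := by
    intro hm
    rw [hMdef, Walk.edges_append, Walk.edges_append] at hm
    rcases List.mem_append.mp hm with hm | hm
    · apply hgQ
      rw [hQsplit, Walk.edges_append]
      exact List.mem_append.mpr (Or.inl hm)
    rcases List.mem_append.mp hm with hm | hm
    · exact hgc₁ (hArcedg _ hm)
    · apply hgQ
      rw [Walk.edges_reverse, List.mem_reverse] at hm
      have : s(u, w) ∈ D.reverse.edges := by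
        rw [hDsplit, Walk.edges_append]
        exact List.mem_append.mpr (Or.inl hm)
      rw [Walk.edges_reverse, List.mem_reverse] at this
      rw [hQsplit, Walk.edges_append]
      exact List.mem_append.mpr (Or.inr this)
  refine Or.inr ⟨u, Walk.cons huw M, (Walk.cons_isCycle_iff M huw).mpr ⟨hMpath, hgM⟩, ?_, ?_⟩
  · rw [Walk.edges_cons, List.mem_cons]
    refine Or.inr ?_
    rw [hMdef, Walk.edges_append, Walk.edges_append]
    exact List.mem_append.mpr (Or.inr (List.mem_append.mpr (Or.inl heArc)))
  · rw [Walk.edges_cons]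
    exact List.mem_cons_self

lemma walk_decomp_of_edges_ne_nil {v z : V} (p : G.Walk v z) (h : p.edges ≠ []) :
    ∃ (c : V) (h₂ : G.Adj v c) (B' : G.Walk c z), p = Walk.cons h₂ B' := by
  cases p with
  | nil => simp at h
  | cons h₂ B' => exact ⟨_, h₂, B', rfl⟩

lemma chain_closed_walk [DecidableEq V] :
    ∀ (n : ℕ) {v : V} (p : G.Walk v v) (hne : p.edges ≠ []), p.length ≤ n →
    List.Chain' (fun x y => v ∈ x → v ∈ y → InCommonBlock G x y) p.edges →
    InCommonBlock G (p.edges.head hne) (p.edges.getLast hne) := by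
  intro n
  induction n with
  | zero =>
    intro v p hne hlen _
    rw [Nat.le_zero] at hlen
    have : p.edges.length = 0 := by rw [Walk.length_edges, hlen]
    exact absurd (List.length_eq_zero_iff.mp this) hne
  | succ n ih =>
    intro v p hne hlen hch
    obtain ⟨a, h, q, rfl⟩ := walk_decomp_of_edges_ne_nil p hne
    have hv : v ∈ q.support := q.end_mem_support
    have hsp : (q.takeUntil v hv).append (q.dropUntil v hv) = q := q.take_spec hv
    have hAnn : ¬ (q.takeUntil v hv).Nil := by
      intro hn
      rw [Walk.nil_iff_support_eq] at hn
      have := (q.takeUntil v hv).end_mem_support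
      rw [hn, List.mem_singleton] at this
      exact h.ne this
    obtain ⟨b, r, h', hAeq⟩ := eq_concat' (q.takeUntil v hv) hAnn
    have hvcount := q.count_support_takeUntil_eq_one hv
    have hvr : v ∉ r.support := by
      intro hm
      rw [hAeq, Walk.support_concat, List.count_append] at hvcount
      simp at hvcount
      have : 0 < List.count v r.support := List.count_pos_iff.mpr hm
      omega
    have icb1 : InCommonBlock G s(v, a) s(b, v) := icb_of_avoid h r h' hvr
    have hAedges : (q.takeUntil v hv).edges = r.edges ++ [s(b, v)] := by
      rw [hAeq, Walk.edges_concat, List.concat_eq_append]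
    have hpedges : (Walk.cons h q).edges
        = (s(v, a) :: r.edges ++ [s(b, v)]) ++ (q.dropUntil v hv).edges := by
      conv_lhs => rw [Walk.edges_cons, ← hsp]
      rw [Walk.edges_append, hAedges]
      simp
    have hhead : (Walk.cons h q).edges.head hne = s(v, a) := by
      rw [head_eq_of_eq' hpedges]; rfl
    by_cases hB : (q.dropUntil v hv).edges = []
    · have hpedges2 : (Walk.cons h q).edges = (s(v, a) :: r.edges) ++ [s(b, v)] := by
        rw [hpedges, hB]; simp
      have hlast : (Walk.cons h q).edges.getLast hne = s(b, v) := by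
        rw [getLast_eq_of_eq' hpedges2]
        exact List.getLast_concat
      rw [hhead, hlast]
      exact icb1
    · obtain ⟨c, h₂, B', hBeq⟩ := walk_decomp_of_edges_ne_nil (q.dropUntil v hv) hB
      have hpedges3 : (Walk.cons h q).edges
          = (s(v, a) :: r.edges) ++ (s(b, v) :: s(v, c) :: B'.edges) := by
        rw [hpedges, hBeq]; simp
      have hch' := hpedges3 ▸ hch
      obtain ⟨-, hR, hchrest⟩ := List.isChain_append_cons_cons.mp hch'
      have icb2 : InCommonBlock G s(b, v) s(v, c) := hR (by simp) (by simp)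
      -- induction on the tail walk
      have hBlen : (q.dropUntil v hv).length ≤ n := by
        have h1 : (Walk.cons h q).length = q.length + 1 := Walk.length_cons _ _
        have h2 : q.length = (q.takeUntil v hv).length + (q.dropUntil v hv).length := by
          conv_lhs => rw [← hsp]
          exact Walk.length_append _ _
        have h3 : 0 < (q.takeUntil v hv).length := Walk.not_nil_iff_lt_length.mp hAnn
        omega
      have hBne : (q.dropUntil v hv).edges ≠ [] := hB
      have hchB : List.Chain' (fun x y => v ∈ x → v ∈ y → InCommonBlock G x y)
          (q.dropUntil v hv).edges := by
        rw [hBeq, Walk.edges_cons]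
        exact hchrest
      have ihB := ih (q.dropUntil v hv) hBne hBlen hchB
      have hheadB : (q.dropUntil v hv).edges.head hBne = s(v, c) := by
        rw [head_eq_of_eq' (by rw [hBeq, Walk.edges_cons])]; rfl
      have hlast : (Walk.cons h q).edges.getLast hne
          = (q.dropUntil v hv).edges.getLast hBne := by
        rw [getLast_eq_of_eq' hpedges]
        exact List.getLast_append_of_ne_nil _ hBne
      rw [hhead, hlast]
      rw [hheadB] at ihB
      exact icb_trans icb1 (icb_trans icb2 ihB)

lemma exists_rotated_edges {a : V} (W : G.Walk a a) (n : ℕ) :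
    ∃ (c : V) (p : G.Walk c c), p.edges = W.edges.rotate n := by
  induction n with
  | zero => exact ⟨a, W, by simp⟩
  | succ n ih =>
    obtain ⟨c, p, hp⟩ := ih
    cases p with
    | nil =>
      refine ⟨c, Walk.nil, ?_⟩
      rw [← List.rotate_rotate, ← hp]
      simp
    | @cons _ d _ h q =>
      refine ⟨d, q.append (Walk.cons h Walk.nil), ?_⟩
      rw [← List.rotate_rotate, ← hp]
      simp [List.rotate_cons_succ]

end Aux

/-- If `W` is a closed walk such that every vertex admits at most one cyclic position where
the two consecutive edges of `W` meeting there do not lie in a common block, then all edges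
of `W` pairwise lie in a common block. -/
theorem stmt5 {V : Type*} [Fintype V] (G : SimpleGraph V) {a : V} (W : G.Walk a a)
    (h : ∀ v : V,
      {i : Fin W.edges.length |
        v ∈ W.edges.get i ∧
        v ∈ W.edges.get ⟨((i : ℕ) + 1) % W.edges.length, Nat.mod_lt _ i.pos⟩ ∧
        ¬ InCommonBlock G (W.edges.get i)
            (W.edges.get ⟨((i : ℕ) + 1) % W.edges.length, Nat.mod_lt _ i.pos⟩)}.Subsingleton) :
    ∀ e ∈ W.edges, ∀ f ∈ W.edges, InCommonBlock G e f := by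
  classical
  have step1 : ∀ (i : Fin W.edges.length),
      InCommonBlock G (W.edges.get i)
        (W.edges.get ⟨((i : ℕ) + 1) % W.edges.length, Nat.mod_lt _ i.pos⟩) := by
    intro i
    by_contra hbad
    obtain ⟨c, p, hp⟩ := exists_rotated_edges W ((i : ℕ) + 1)
    have hplen : p.edges.length = W.edges.length := by rw [hp, List.length_rotate]
    have hm0 : 0 < W.edges.length := i.pos
    have hpne : p.edges ≠ [] := List.ne_nil_of_length_pos (by omega)
    -- a uniform description of the entries of p.edges
    have hgl : ∀ (k : Fin p.edges.length), p.edges.get k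
        = W.edges.get ⟨((k : ℕ) + ((i : ℕ) + 1)) % W.edges.length, Nat.mod_lt _ hm0⟩ := by
      intro k
      rw [get_eq_of_eq' hp, List.get_rotate]
    -- head of p.edges is the (i+1)-th edge, last is the i-th edge
    have hhead : p.edges.head hpne
        = W.edges.get ⟨((i : ℕ) + 1) % W.edges.length, Nat.mod_lt _ i.pos⟩ := by
      rw [head_eq_get' _ hpne (by omega), hgl]
      congr 1
      exact Fin.ext (by simp)
    have hlast : p.edges.getLast hpne = W.edges.get i := by
      rw [List.getLast_eq_getElem]
      rw [show p.edges[p.edges.length - 1] = p.edges.get ⟨p.edges.length - 1, by omega⟩ from rfl, hgl]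
      congr 1
      refine Fin.ext ?_
      show (p.edges.length - 1 + ((i : ℕ) + 1)) % W.edges.length = (i : ℕ)
      have h1 : p.edges.length - 1 + ((i : ℕ) + 1) = W.edges.length + (i : ℕ) := by omega
      rw [h1, Nat.add_mod_left]
      exact Nat.mod_eq_of_lt i.isLt
    have hchain : List.Chain' (fun x y => c ∈ x → c ∈ y → InCommonBlock G x y) p.edges := by
      rw [List.Chain', List.isChain_iff_getElem]
      intro j hj
      intro hcx hcy
      by_contra hni
      change c ∈ p.edges.get ⟨j, by omega⟩ at hcx
      change c ∈ p.edges.get ⟨j + 1, by omega⟩ at hcy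
      change ¬ InCommonBlock G (p.edges.get ⟨j, by omega⟩) (p.edges.get ⟨j + 1, by omega⟩) at hni
      -- translate the two gets into W.edges gets
      have hg1 : p.edges.get ⟨j, by omega⟩
          = W.edges.get ⟨(j + ((i : ℕ) + 1)) % W.edges.length, Nat.mod_lt _ hm0⟩ := hgl _
      have hg2 : p.edges.get ⟨j + 1, by omega⟩
          = W.edges.get ⟨((j + ((i : ℕ) + 1)) % W.edges.length + 1) % W.edges.length,
              Nat.mod_lt _ hm0⟩ := by
        rw [hgl]
        congr 1
        refine Fin.ext ?_
        show (j + 1 + ((i : ℕ) + 1)) % W.edges.length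
            = ((j + ((i : ℕ) + 1)) % W.edges.length + 1) % W.edges.length
        rw [Nat.mod_add_mod]
        congr 1
        omega
      set t : ℕ := (j + ((i : ℕ) + 1)) % W.edges.length with htdef
      have hti : t ≠ (i : ℕ) := by
        intro hti
        have hjlt : j + 1 < W.edges.length := by
          rw [hplen] at hj; omega
        rcases lt_or_ge (j + ((i : ℕ) + 1)) W.edges.length with hcase | hcase
        · rw [htdef] at hti
          rw [Nat.mod_eq_of_lt hcase] at hti
          omega
        · rw [htdef] at hti
          rw [Nat.mod_eq_sub_mod hcase, Nat.mod_eq_of_lt (by omega)] at hti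
          omega
      -- two distinct bad indices at c
      have hmem_t : (⟨t, Nat.mod_lt _ hm0⟩ : Fin W.edges.length) ∈
          {i' : Fin W.edges.length |
            c ∈ W.edges.get i' ∧
            c ∈ W.edges.get ⟨((i' : ℕ) + 1) % W.edges.length, Nat.mod_lt _ i'.pos⟩ ∧
            ¬ InCommonBlock G (W.edges.get i')


                (W.edges.get ⟨((i' : ℕ) + 1) % W.edges.length, Nat.mod_lt _ i'.pos⟩)} := by
        rw [hg1] at hcx hni
        rw [hg2] at hcy hni
        exact ⟨hcx, hcy, hni⟩
      have hmem_i : i ∈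
          {i' : Fin W.edges.length |
            c ∈ W.edges.get i' ∧
            c ∈ W.edges.get ⟨((i' : ℕ) + 1) % W.edges.length, Nat.mod_lt _ i'.pos⟩ ∧
            ¬ InCommonBlock G (W.edges.get i')
                (W.edges.get ⟨((i' : ℕ) + 1) % W.edges.length, Nat.mod_lt _ i'.pos⟩)} := by
        refine ⟨?_, ?_, hbad⟩
        · rw [← hlast]; exact lastEdge_mem p hpne
        · rw [← hhead]; exact firstEdge_mem p hpne
      have := h c hmem_t hmem_i
      rw [Fin.mk.injEq] at this
      exact hti (by exact_mod_cast this)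
    have := chain_closed_walk p.length p hpne le_rfl hchain
    rw [hhead, hlast] at this
    exact hbad (icb_symm this)
  -- Step 2: chain all edges together
  intro e he f hf
  obtain ⟨je, hje⟩ := List.mem_iff_get.mp he
  obtain ⟨jf, hjf⟩ := List.mem_iff_get.mp hf
  have hm0 : 0 < W.edges.length := jf.pos
  have key : ∀ (jv : ℕ) (hjv : jv < W.edges.length),
      InCommonBlock G (W.edges.get ⟨0, hm0⟩) (W.edges.get ⟨jv, hjv⟩) := by
    intro jv
    induction jv with
    | zero => intro h0; exact Or.inl rfl
    | succ jv ih =>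
      intro hjv
      have hjv' : jv < W.edges.length := by omega
      have step := step1 ⟨jv, hjv'⟩
      have hmod : (jv + 1) % W.edges.length = jv + 1 := Nat.mod_eq_of_lt hjv
      have : InCommonBlock G (W.edges.get ⟨jv, hjv'⟩) (W.edges.get ⟨jv + 1, hjv⟩) := by
        convert step using 2
        exact Fin.ext hmod.symm
      exact icb_trans (ih hjv') this
  rw [← hje, ← hjf]
  exact icb_trans (icb_symm (key je je.isLt)) (key jf jf.isLt)
end

section
/- Let G be a finite simple graph on vertex set V, let T ⊆ V, and let G' be the graph obtained from G by adding a new vertex s ∉ V adjacent exactly to all vertices of T. Then for every X ⊆ V with X ∩ T = ∅, the following are equivalent: (i) X contains an internal or end vertex of every path of G whose two (distinct) endpoints both lie in T; (ii) every cycle of G' passing through s contains a vertex of X. -/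
open SimpleGraph

/-- The graph obtained from `G` by adding a new apex vertex (the `none` vertex)
adjacent exactly to the vertices of `T`. -/
def addApex {V : Type*} (G : SimpleGraph V) (T : Set V) : SimpleGraph (Option V) where
  Adj a b :=
    match a, b with
    | some x, some y => G.Adj x y
    | some x, none => x ∈ T
    | none, some y => y ∈ T
    | none, none => False
  symm := by
    constructor
    rintro (_ | x) (_ | y) h
    · exact h.elim
    · exact h
    · exact h
    · exact h.symm
  loopless := by
    constructor
    rintro (_ | x) h
    · exact h.elim
    · exact G.irrefl h

lemma extract_walk {V : Type*} {G : SimpleGraph V} {T : Set V} :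
    ∀ {a b : Option V} (w : (addApex G T).Walk a b), none ∉ w.support →
    ∃ (x y : V) (_ : a = some x) (_ : b = some y) (p : G.Walk x y),
      p.support.map some = w.support := by
  intro a b w
  induction w with
  | nil =>
    intro hn
    simp only [SimpleGraph.Walk.support_nil, List.mem_singleton] at hn
    obtain ⟨x, rfl⟩ := Option.ne_none_iff_exists'.mp (Ne.symm hn)
    exact ⟨x, x, rfl, rfl, SimpleGraph.Walk.nil, rfl⟩
  | @cons a c b h w ih =>
    intro hn
    simp only [SimpleGraph.Walk.support_cons, List.mem_cons] at hn
    push_neg at hn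
    obtain ⟨x, rfl⟩ := Option.ne_none_iff_exists'.mp (Ne.symm hn.1)
    obtain ⟨z, y, hz, rfl, p', hp'⟩ := ih hn.2
    subst hz
    refine ⟨x, y, rfl, rfl, SimpleGraph.Walk.cons h p', ?_⟩
    show some x :: List.map some p'.support = some x :: w.support; rw [hp']

/-- `some` as a graph homomorphism `G →g addApex G T`. -/
def someHom {V : Type*} (G : SimpleGraph V) (T : Set V) : G →g addApex G T where
  toFun := some
  map_rel' := fun h => h

/-- For `X ⊆ V` with `X ∩ T = ∅`: `X` hits every path of `G` whose two distinct endpoints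
lie in `T` iff every cycle of `G'` (obtained by adding an apex `s` adjacent to `T`)
through `s` contains a vertex of `X`. -/
theorem stmt7 {V : Type*} [Fintype V] (G : SimpleGraph V) (T : Set V)
    (X : Set V) (hXT : X ∩ T = ∅) :
    (∀ (a b : V) (p : G.Walk a b), p.IsPath → a ≠ b → a ∈ T → b ∈ T →
        ∃ x ∈ X, x ∈ p.support) ↔
    (∀ (a : Option V) (c : (addApex G T).Walk a a), c.IsCycle →
        (none : Option V) ∈ c.support → ∃ x ∈ X, some x ∈ c.support) := by
  classical
  constructor
  · -- (i) → (ii)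
    intro hi a c hc hs
    -- rotate the cycle so it starts at `none`
    have hrot : ((c.rotate none hs).support.tail).Perm (c.support.tail) :=
      (SimpleGraph.Walk.support_rotate c none hs).perm
    suffices h : ∃ x ∈ X, some x ∈ (c.rotate none hs).support.tail by
      obtain ⟨x, hx, hmem⟩ := h
      exact ⟨x, hx, List.mem_of_mem_tail (hrot.mem_iff.mp hmem)⟩
    have hc' : (c.rotate none hs).IsCycle := hc.rotate hs
    set c' := c.rotate none hs with hc'def
    clear_value c'
    clear hrot hc hc'def hs c
    cases c' with
    | nil => exact absurd rfl hc'.ne_nil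
    | @cons _ a _ ha q =>
      rw [SimpleGraph.Walk.cons_isCycle_iff] at hc'
      obtain ⟨hq, hedge⟩ := hc'
      -- q : Walk a none, a path; decompose q.reverse : Walk none a
      have hnn : ¬ q.reverse.Nil := by
        intro h
        have : (none : Option V) = a := h.eq
        subst this
        exact (addApex G T).irrefl ha
      obtain ⟨b, hb, r, hw⟩ := SimpleGraph.Walk.not_nil_iff.mp hnn
      have hqr : q.reverse.IsPath := hq.reverse
      rw [hw] at hqr
      have hnr : none ∉ r.support := by
        have := hqr.support_nodup
        simp only [SimpleGraph.Walk.support_cons, List.nodup_cons] at this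
        exact this.1
      obtain ⟨b₀, a₀, hb₀, ha₀, p, hps⟩ := extract_walk r hnr
      subst hb₀; subst ha₀
      -- the head edge of q.reverse lies in q.edges
      have hbe : s(none, some b₀) ∈ q.edges := by
        have h1 : s(none, some b₀) ∈ q.reverse.edges := by
          rw [hw]; simp
        simpa [SimpleGraph.Walk.edges_reverse] using h1
      have hne : b₀ ≠ a₀ := by
        rintro rfl
        exact hedge hbe
      have hr : r.IsPath := hqr.of_cons
      have hppath : p.IsPath := by
        rw [SimpleGraph.Walk.isPath_def]
        refine List.Nodup.of_map some ?_
        rw [hps]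
        exact hr.support_nodup
      obtain ⟨x, hx, hxp⟩ := hi b₀ a₀ p hppath hne hb ha
      refine ⟨x, hx, ?_⟩
      have h1 : some x ∈ r.support := by
        rw [← hps]; exact List.mem_map_of_mem hxp
      have h2 : some x ∈ q.reverse.support := by
        rw [hw, SimpleGraph.Walk.support_cons]; exact List.mem_cons_of_mem _ h1
      rw [SimpleGraph.Walk.support_reverse, List.mem_reverse] at h2
      simpa using h2
  · -- (ii) → (i)
    intro hii a b p hp hab ha hb
    -- map p into the apex graph and close it through `none`
    have hinj : Function.Injective (someHom G T) := fun _ _ h => Option.some.inj h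
    set p' : (addApex G T).Walk (some a) (some b) := p.map (someHom G T) with hp'def
    have hp'path : p'.IsPath := SimpleGraph.Walk.map_isPath_of_injective hinj hp
    have hnp' : none ∉ p'.support := by
      rw [show p'.support = (p.map (someHom G T)).support from rfl, SimpleGraph.Walk.support_map]
      simp [someHom]
    have hadj_b : (addApex G T).Adj (some b) none := hb
    have hadj_a : (addApex G T).Adj none (some a) := ha
    -- the closed walk none → a → ... → b → none
    set q : (addApex G T).Walk (some a) none := p'.concat hadj_b with hqdef
    have hqpath : q.IsPath := by
      rw [SimpleGraph.Walk.isPath_def, hqdef, SimpleGraph.Walk.support_concat,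
        List.nodup_append]
      refine ⟨hp'path.support_nodup, List.nodup_singleton _, ?_⟩
      intro y hy z hy'
      simp only [List.mem_singleton] at hy'
      exact fun h => hnp' (hy' ▸ h ▸ hy)
    have hedge : s(none, some a) ∉ q.edges := by
      rw [hqdef, SimpleGraph.Walk.edges_concat, List.concat_eq_append, List.mem_append,
        List.mem_singleton]
      rintro (h | h)
      · exact hnp' (SimpleGraph.Walk.fst_mem_support_of_mem_edges p' h)
      · rw [Sym2.eq_iff] at h
        rcases h with ⟨h1, h2⟩ | ⟨h1, h2⟩
        · cases h1
        · exact hab (Option.some.inj h2)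
    have hcyc : (SimpleGraph.Walk.cons hadj_a q).IsCycle :=
      (SimpleGraph.Walk.cons_isCycle_iff q hadj_a).mpr ⟨hqpath, hedge⟩
    obtain ⟨x, hx, hxmem⟩ := hii none (SimpleGraph.Walk.cons hadj_a q) hcyc (by simp)
    refine ⟨x, hx, ?_⟩
    rw [SimpleGraph.Walk.support_cons, List.mem_cons] at hxmem
    rcases hxmem with h | h
    · cases h
    · rw [hqdef, SimpleGraph.Walk.support_concat, List.mem_append,
        List.mem_singleton] at h
      rcases h with h | h
      · rw [show p'.support = (p.map (someHom G T)).support from rfl, SimpleGraph.Walk.support_map,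
          List.mem_map] at h
        obtain ⟨y, hy, hyx⟩ := h
        have : y = x := Option.some.inj hyx
        exact this ▸ hy
      · simp at h
end

section
/- Let A(u,v) be the arrow graph. Then {a1, a3} is an odd cycle transversal of A(u,v), every odd cycle transversal of A(u,v) has size at least 2, and {a1, a3} is the unique odd cycle transversal of A(u,v) of size 2. -/
open SimpleGraph

/-- The nine vertices of the arrow graph `A(u,v)`. -/
inductive ArrowV : Type
  | u | a1 | a2 | a3 | v | b1 | b2 | b3 | b4
  deriving DecidableEq

instance : Fintype ArrowV where
  elems := {ArrowV.u, ArrowV.a1, ArrowV.a2, ArrowV.a3, ArrowV.v, ArrowV.b1, ArrowV.b2,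
    ArrowV.b3, ArrowV.b4}
  complete := by intro x; cases x <;> decide

/-- The arrow graph `A(u,v)`, with edges
`u a1, a1 a2, a2 a3, a3 v, u b1, b1 a1, a1 b2, b2 a2, a2 b3, b3 a3, a3 b4, b4 v`. -/
def arrowGraph : SimpleGraph ArrowV :=
  SimpleGraph.fromRel (fun x y =>
    (x, y) ∈ ([(ArrowV.u, ArrowV.a1), (ArrowV.a1, ArrowV.a2), (ArrowV.a2, ArrowV.a3),
      (ArrowV.a3, ArrowV.v), (ArrowV.u, ArrowV.b1), (ArrowV.b1, ArrowV.a1),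
      (ArrowV.a1, ArrowV.b2), (ArrowV.b2, ArrowV.a2), (ArrowV.a2, ArrowV.b3),
      (ArrowV.b3, ArrowV.a3), (ArrowV.a3, ArrowV.b4), (ArrowV.b4, ArrowV.v)] :
        List (ArrowV × ArrowV)))

/-- `X` is an odd cycle transversal of `H`: the graph `H − X` contains no odd cycle. -/
def IsOCT {W : Type*} (H : SimpleGraph W) (X : Set W) : Prop :=
  ∀ (a : ↥Xᶜ) (c : (H.induce Xᶜ).Walk a a), c.IsCycle → ¬ Odd c.length

lemma walk_parity {W : Type*} {G : SimpleGraph W} (f : W → ZMod 2)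
    (hf : ∀ x y, G.Adj x y → f y = f x + 1) :
    ∀ {a b : W} (p : G.Walk a b), f b = f a + p.length := by
  intro a b p
  induction p with
  | nil => simp
  | cons h q ih =>
    rw [Walk.length_cons, ih, hf _ _ h]
    push_cast
    ring

lemma triangle_cycle {W : Type*} {G : SimpleGraph W} {x y z : W}
    (hxy : G.Adj x y) (hyz : G.Adj y z) (hzx : G.Adj z x) :
    ∃ c : G.Walk x x, c.IsCycle ∧ c.length = 3 := by
  have h1 := hxy.ne
  have h2 := hyz.ne
  have h3 := hzx.ne
  refine ⟨Walk.cons hxy (Walk.cons hyz (Walk.cons hzx Walk.nil)), ?_, rfl⟩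
  refine ⟨⟨⟨?_⟩, by simp⟩, ?_⟩
  · simp [Walk.edges, Sym2.eq_iff]
    tauto
  · simp [Walk.support]
    tauto

lemma oct_hits_triangle {W : Type*} {H : SimpleGraph W} {X : Set W} (h : IsOCT H X)
    {x y z : W} (hxy : H.Adj x y) (hyz : H.Adj y z) (hzx : H.Adj z x) :
    x ∈ X ∨ y ∈ X ∨ z ∈ X := by
  by_contra hc
  push_neg at hc
  obtain ⟨hx, hy, hz⟩ := hc
  have hxy' : (H.induce Xᶜ).Adj ⟨x, hx⟩ ⟨y, hy⟩ := hxy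
  have hyz' : (H.induce Xᶜ).Adj ⟨y, hy⟩ ⟨z, hz⟩ := hyz
  have hzx' : (H.induce Xᶜ).Adj ⟨z, hz⟩ ⟨x, hx⟩ := hzx
  obtain ⟨c, hc, hl⟩ := triangle_cycle hxy' hyz' hzx'
  exact h _ c hc (by rw [hl]; decide)

def col : ArrowV → ZMod 2
  | ArrowV.u => 0 | ArrowV.b1 => 1 | ArrowV.b2 => 0 | ArrowV.a2 => 1
  | ArrowV.b3 => 0 | ArrowV.b4 => 0 | ArrowV.v => 1
  | ArrowV.a1 => 0 | ArrowV.a3 => 0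

instance : DecidableRel arrowGraph.Adj := fun x y => by
  unfold arrowGraph; rw [SimpleGraph.fromRel_adj]; infer_instance

lemma col_adj : ∀ x y : ArrowV, arrowGraph.Adj x y → x ≠ ArrowV.a1 → x ≠ ArrowV.a3 →
    y ≠ ArrowV.a1 → y ≠ ArrowV.a3 → col y = col x + 1 := by decide

lemma part1 : IsOCT arrowGraph {ArrowV.a1, ArrowV.a3} := by
  intro a c hc hodd
  have key : ∀ x y : (↥({ArrowV.a1, ArrowV.a3} : Set ArrowV)ᶜ),
      (arrowGraph.induce _).Adj x y → col y.val = col x.val + 1 := by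
    rintro ⟨x, hx⟩ ⟨y, hy⟩ hadj
    have hadj' : arrowGraph.Adj x y := hadj
    simp only [Set.mem_compl_iff, Set.mem_insert_iff, Set.mem_singleton_iff] at hx hy
    push_neg at hx hy
    exact col_adj x y hadj' hx.1 hx.2 hy.1 hy.2
  have hpar := walk_parity (fun w => col w.val) key c
  have h0 : ((c.length : ℕ) : ZMod 2) = 0 := by
    have := hpar.symm
    rwa [add_eq_left] at this
  rw [ZMod.natCast_eq_zero_iff] at h0
  exact (Nat.not_even_iff_odd.mpr hodd) (even_iff_two_dvd.mpr h0)

lemma two_le {X : Set ArrowV} {p q : ArrowV} (hp : p ∈ X) (hq : q ∈ X) (h : p ≠ q) :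
    2 ≤ X.ncard := by
  rw [← Set.ncard_pair h]
  exact Set.ncard_le_ncard (by simp [Set.insert_subset_iff, hp, hq]) X.toFinite

lemma three_le {X : Set ArrowV} {p q r : ArrowV} (hp : p ∈ X) (hq : q ∈ X) (hr : r ∈ X)
    (hpq : p ≠ q) (hpr : p ≠ r) (hqr : q ≠ r) : 3 ≤ X.ncard := by
  have : ({p, q, r} : Set ArrowV).ncard = 3 := by
    rw [Set.ncard_insert_of_notMem (by simp [hpq, hpr]) (Set.toFinite _), Set.ncard_pair hqr]
  rw [← this]
  exact Set.ncard_le_ncard (by simp [Set.insert_subset_iff, hp, hq, hr]) X.toFinite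

lemma hits (X : Set ArrowV) (hX : IsOCT arrowGraph X) :
    (ArrowV.u ∈ X ∨ ArrowV.b1 ∈ X ∨ ArrowV.a1 ∈ X) ∧
    (ArrowV.a1 ∈ X ∨ ArrowV.b2 ∈ X ∨ ArrowV.a2 ∈ X) ∧
    (ArrowV.a2 ∈ X ∨ ArrowV.b3 ∈ X ∨ ArrowV.a3 ∈ X) ∧
    (ArrowV.a3 ∈ X ∨ ArrowV.b4 ∈ X ∨ ArrowV.v ∈ X) := by
  refine ⟨?_, ?_, ?_, ?_⟩ <;>
    exact oct_hits_triangle hX (by decide) (by decide) (by decide)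

/-- `{a1, a3}` is an OCT of the arrow graph, every OCT of the arrow graph has size at
least 2, and `{a1, a3}` is the unique OCT of size 2. -/
theorem stmt10 :
    IsOCT arrowGraph {ArrowV.a1, ArrowV.a3} ∧
    (∀ X : Set ArrowV, IsOCT arrowGraph X → 2 ≤ X.ncard) ∧
    (∀ X : Set ArrowV, IsOCT arrowGraph X → X.ncard = 2 →
      X = {ArrowV.a1, ArrowV.a3}) := by
  refine ⟨part1, ?_, ?_⟩
  · intro X hX
    obtain ⟨h1, -, h3, -⟩ := hits X hX
    rcases h1 with hp | hp | hp <;> rcases h3 with hq | hq | hq <;>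
      exact two_le hp hq (by decide)
  · intro X hX hcard
    obtain ⟨h1, h2, h3, h4⟩ := hits X hX
    have ha1 : ArrowV.a1 ∈ X := by
      by_contra ha1
      have h1' : ArrowV.u ∈ X ∨ ArrowV.b1 ∈ X := by
        rcases h1 with h | h | h; exacts [Or.inl h, Or.inr h, absurd h ha1]
      have h2' : ArrowV.b2 ∈ X ∨ ArrowV.a2 ∈ X := by
        rcases h2 with h | h | h; exacts [absurd h ha1, Or.inl h, Or.inr h]
      rcases h1' with hp | hp <;> rcases h2' with hq | hq <;>
        rcases h4 with hr | hr | hr <;>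
        · have := three_le hp hq hr (by decide) (by decide) (by decide)
          omega
    have ha3 : ArrowV.a3 ∈ X := by
      by_contra ha3
      have h4' : ArrowV.b4 ∈ X ∨ ArrowV.v ∈ X := by
        rcases h4 with h | h | h; exacts [absurd h ha3, Or.inl h, Or.inr h]
      have h3' : ArrowV.a2 ∈ X ∨ ArrowV.b3 ∈ X := by
        rcases h3 with h | h | h; exacts [Or.inl h, Or.inr h, absurd h ha3]
      rcases h3' with hp | hp <;> rcases h4' with hq | hq <;>
        rcases h1 with hr | hr | hr <;>
        · have := three_le hp hq hr (by decide) (by decide) (by decide)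
          omega
    refine (Set.eq_of_subset_of_ncard_le ?_ ?_ X.toFinite).symm
    · simp [Set.insert_subset_iff, ha1, ha3]
    · rw [hcard, Set.ncard_pair (by decide)]
end

section
/- Let A(u,v) be the arrow graph and let H = A(u,v) − u. Then every odd cycle transversal of H that contains v and has size exactly 2 equals {a2, v}. -/
open SimpleGraph

/-- The arrow graph with the vertex `u` deleted. -/
def arrowDelU : SimpleGraph ↥{w : ArrowV | w ≠ ArrowV.u} :=
  arrowGraph.induce {w : ArrowV | w ≠ ArrowV.u}

lemma no_triangle {W : Type*} (H : SimpleGraph W) (X : Set W)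
    (h : IsOCT H X)
    (a b c : W) (ha : a ∉ X) (hb : b ∉ X) (hc : c ∉ X)
    (hab : H.Adj a b) (hbc : H.Adj b c) (hca : H.Adj c a) : False := by
  let a' : ↥Xᶜ := ⟨a, ha⟩
  let b' : ↥Xᶜ := ⟨b, hb⟩
  let c' : ↥Xᶜ := ⟨c, hc⟩
  have hab' : (H.induce Xᶜ).Adj a' b' := hab
  have hbc' : (H.induce Xᶜ).Adj b' c' := hbc
  have hca' : (H.induce Xᶜ).Adj c' a' := hca
  let w : (H.induce Xᶜ).Walk a' a' :=
    Walk.cons hab' (Walk.cons hbc' (Walk.cons hca' Walk.nil))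
  have hne1 : a' ≠ b' := fun e => hab.ne (congrArg Subtype.val e)
  have hne2 : b' ≠ c' := fun e => hbc.ne (congrArg Subtype.val e)
  have hne3 : c' ≠ a' := fun e => hca.ne (congrArg Subtype.val e)
  have hcyc : w.IsCycle := by
    simp [w, Walk.isCycle_def, Walk.isTrail_def, hne1, hne2, hne3, Sym2.eq_iff,
      hne1.symm, hne2.symm, hne3.symm, Ne.symm]
  exact h a' w hcyc (by simp [w]; decide)

lemma key (x : ↥{w : ArrowV | w ≠ ArrowV.u})
    (hx : x ≠ (⟨ArrowV.v, by simp⟩ : ↥{w : ArrowV | w ≠ ArrowV.u}))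
    (h : IsOCT arrowDelU ({x, ⟨ArrowV.v, by simp⟩} : Set _)) :
    x = (⟨ArrowV.a2, by simp⟩ : ↥{w : ArrowV | w ≠ ArrowV.u}) := by
  obtain ⟨xv, hxu⟩ := x
  have hT1 : ∀ (ha : _ ∉ _) (hb : _ ∉ _) (hc : _ ∉ _), False := fun ha hb hc =>
    no_triangle arrowDelU _ h
    (⟨ArrowV.a1, by simp⟩ : ↥{w : ArrowV | w ≠ ArrowV.u}) ⟨ArrowV.b2, by simp⟩
    ⟨ArrowV.a2, by simp⟩ ha hb hc
    ⟨by decide, Or.inl (by decide)⟩ ⟨by decide, Or.inl (by decide)⟩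
    ⟨by decide, Or.inr (by decide)⟩
  have hT2 : ∀ (ha : _ ∉ _) (hb : _ ∉ _) (hc : _ ∉ _), False := fun ha hb hc =>
    no_triangle arrowDelU _ h
    (⟨ArrowV.a2, by simp⟩ : ↥{w : ArrowV | w ≠ ArrowV.u}) ⟨ArrowV.b3, by simp⟩
    ⟨ArrowV.a3, by simp⟩ ha hb hc
    ⟨by decide, Or.inl (by decide)⟩ ⟨by decide, Or.inl (by decide)⟩
    ⟨by decide, Or.inr (by decide)⟩
  cases xv with
  | u => exact absurd rfl hxu
  | a2 => rfl
  | v => exact absurd (Subtype.ext rfl) hx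
  | a1 => exact absurd (hT2 (by simp [Subtype.ext_iff]) (by simp [Subtype.ext_iff])
      (by simp [Subtype.ext_iff])) not_false
  | b1 => exact absurd (hT2 (by simp [Subtype.ext_iff]) (by simp [Subtype.ext_iff])
      (by simp [Subtype.ext_iff])) not_false
  | b2 => exact absurd (hT2 (by simp [Subtype.ext_iff]) (by simp [Subtype.ext_iff])
      (by simp [Subtype.ext_iff])) not_false
  | b4 => exact absurd (hT2 (by simp [Subtype.ext_iff]) (by simp [Subtype.ext_iff])
      (by simp [Subtype.ext_iff])) not_false
  | a3 => exact absurd (hT1 (by simp [Subtype.ext_iff]) (by simp [Subtype.ext_iff])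
      (by simp [Subtype.ext_iff])) not_false
  | b3 => exact absurd (hT1 (by simp [Subtype.ext_iff]) (by simp [Subtype.ext_iff])
      (by simp [Subtype.ext_iff])) not_false

/-- Every OCT of `A(u,v) − u` that contains `v` and has size exactly 2 equals `{a2, v}`. -/
theorem stmt12 (X : Set ↥{w : ArrowV | w ≠ ArrowV.u})
    (hX : IsOCT arrowDelU X)
    (hv : (⟨ArrowV.v, by simp⟩ : ↥{w : ArrowV | w ≠ ArrowV.u}) ∈ X)
    (hcard : X.ncard = 2) :
    X = {(⟨ArrowV.a2, by simp⟩ : ↥{w : ArrowV | w ≠ ArrowV.u}), ⟨ArrowV.v, by simp⟩} := by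
  obtain ⟨p, q, hpq, rfl⟩ := Set.ncard_eq_two.mp hcard
  rcases hv with hv | hv
  · subst hv
    have hq := key q (Ne.symm hpq) (by rwa [Set.pair_comm] at hX)
    rw [hq]
    exact Set.pair_comm _ _
  · have hv' : q = ⟨ArrowV.v, by simp⟩ := hv.symm
    subst hv'
    have hp := key p hpq hX
    rw [hp]
end

section
/- Let G be a 2-connected finite simple graph on vertex set V with |V| ≥ 3, and let S ⊆ V. If G contains no even S-cycle, then every vertex of S has degree exactly 2 in G. -/
open SimpleGraph

private lemma my_append_isPath {V : Type*} {G : SimpleGraph V} {u v x : V}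
    {p : G.Walk u v} {q : G.Walk v x} (hp : p.IsPath) (hq : q.IsPath)
    (hmeet : ∀ z, z ∈ p.support → z ∈ q.support → z = v) :
    (p.append q).IsPath := by
  apply Walk.IsPath.mk'
  rw [Walk.support_append, List.nodup_append']
  have hq' := hq.support_nodup
  rw [q.support_eq_cons, List.nodup_cons] at hq'
  refine ⟨hp.support_nodup, hq'.2, fun z hz hz' => ?_⟩
  have : z ∈ q.support := by rw [q.support_eq_cons]; exact List.mem_cons_of_mem _ hz'
  exact hq'.1 (hmeet z hz this ▸ hz')

private lemma cycle_of_adj_path {V : Type*} {G : SimpleGraph V} {w a b : V}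
    (hwa : G.Adj w a) (hbw : G.Adj b w) (hab : a ≠ b)
    (p : G.Walk a b) (hp : p.IsPath) (hw : w ∉ p.support) :
    ∃ c : G.Walk w w, c.IsCycle ∧ c.length = p.length + 2 ∧ w ∈ c.support := by
  refine ⟨Walk.cons hwa (p.concat hbw), ?_, by simp [Walk.length_concat], Walk.start_mem_support _⟩
  rw [Walk.cons_isCycle_iff]
  constructor
  · apply Walk.IsPath.mk'
    rw [Walk.support_concat, List.nodup_append']
    exact ⟨hp.support_nodup, List.nodup_singleton _, by
      intro z hz hz'; rw [List.mem_singleton] at hz'; subst hz'; exact hw hz⟩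
  · rw [Walk.edges_concat, List.concat_eq_append, List.mem_append]
    rintro (h1 | h2)
    · exact hw (p.fst_mem_support_of_mem_edges h1)
    · rw [List.mem_singleton, Sym2.eq_iff] at h2
      rcases h2 with ⟨h2, _⟩ | ⟨_, h2⟩
      · exact hbw.ne h2.symm
      · exact hab h2

private lemma exists_first_hit_s13 {W : Type*} [DecidableEq W] {H : SimpleGraph W} (T : Set W) :
    ∀ {c y : W} (q : H.Walk c y), y ∈ T →
      ∃ x, x ∈ T ∧ ∃ r : H.Walk c x, r.IsPath ∧ ∀ z ∈ r.support, z ∈ T → z = x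
  | _, _, Walk.nil, hy => ⟨_, hy, Walk.nil, by simp, by simp⟩
  | c, _, Walk.cons hadj q, hy => by
    by_cases hc : c ∈ T
    · exact ⟨c, hc, Walk.nil, by simp, by simp⟩
    · obtain ⟨x, hx, r, _, hprop⟩ := exists_first_hit_s13 T q hy
      refine ⟨x, hx, (Walk.cons hadj r).bypass, Walk.bypass_isPath _, fun z hz hzT => ?_⟩
      have h2 : z ∈ (Walk.cons hadj r).support := Walk.support_bypass_subset _ hz
      rw [Walk.support_cons, List.mem_cons] at h2
      rcases h2 with rfl | h2
      · exact absurd hzT hc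
      · exact hprop z h2 hzT

/-- If a 2-connected graph contains no even `S`-cycle, then every vertex of `S` has
degree exactly 2. -/
theorem stmt13 {V : Type*} [Fintype V] (G : SimpleGraph V) [DecidableRel G.Adj]
    (hG : TwoConnected G) (S : Set V)
    (h : ¬ ∃ (a : V) (c : G.Walk a a), c.IsCycle ∧ Even c.length ∧ ∃ w ∈ S, w ∈ c.support) :
    ∀ w ∈ S, G.degree w = 2 := by
  classical
  obtain ⟨hcard, hconn, hdel⟩ := hG
  intro w hwS
  have hodd : ∀ {a b : V}, G.Adj w a → G.Adj b w → a ≠ b →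
      ∀ p : G.Walk a b, p.IsPath → w ∉ p.support → p.length % 2 = 1 := by
    intro a b hwa hbw hab p hp hwp
    obtain ⟨c, hc, hlen, hmem⟩ := cycle_of_adj_path hwa hbw hab p hp hwp
    have hne : ¬ Even c.length := fun he => h ⟨w, c, hc, he, w, hwS, hmem⟩
    rw [Nat.even_iff] at hne
    omega
  -- upper bound
  have hub : G.degree w ≤ 2 := by
    by_contra hdeg
    push_neg at hdeg
    have hdeg' : 2 < (G.neighborFinset w).card := hdeg
    obtain ⟨a, b, ha, hb, hab⟩ := (Finset.one_lt_card_iff (s := G.neighborFinset w)).mp (by omega)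
    have hbe : b ∈ (G.neighborFinset w).erase a := Finset.mem_erase.mpr ⟨hab.symm, hb⟩
    have hc1 : 0 < (((G.neighborFinset w).erase a).erase b).card := by
      rw [Finset.card_erase_of_mem hbe, Finset.card_erase_of_mem ha]; omega
    obtain ⟨c0, hc0⟩ := Finset.card_pos.mp hc1
    rw [Finset.mem_erase, Finset.mem_erase] at hc0
    obtain ⟨hcb, hca, hcmem⟩ := hc0
    rw [SimpleGraph.mem_neighborFinset] at ha hb hcmem
    -- work in the induced graph on V \ {w}
    set s : Set V := {z : V | z ≠ w} with hs
    have hH : (G.induce s).Connected := hdel w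
    set a' : s := ⟨a, ha.ne'⟩
    set b' : s := ⟨b, hb.ne'⟩
    set c' : s := ⟨c0, hcmem.ne'⟩
    obtain ⟨P0⟩ := hH.preconnected a' b'
    set P := P0.bypass with hPdef
    have hP : P.IsPath := P0.bypass_isPath
    set T : Set s := {z | z ∈ P.support} with hT
    obtain ⟨Q⟩ := hH.preconnected c' a'
    obtain ⟨x, hxT, r, hr, hprop⟩ := exists_first_hit_s13 T Q P.start_mem_support
    have hxP : x ∈ P.support := hxT
    set tA := P.takeUntil x hxP with htA
    set tB := P.dropUntil x hxP with htB
    have hspec := P.take_spec hxP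
    have hlenP : tA.length + tB.length = P.length := by
      have := congrArg Walk.length hspec
      rwa [Walk.length_append] at this
    have htAp : tA.IsPath := hP.takeUntil hxP
    have htBp : tB.IsPath := hP.dropUntil hxP
    -- disjointness of tA and tB except at x
    have dis1 : ∀ z, z ∈ tA.support → z ∈ tB.support → z = x := by
      intro z hzA hzB
      have hnd := hP.support_nodup
      rw [← hspec, Walk.support_append, List.nodup_append'] at hnd
      have hzB' : z ∈ x :: tB.support.tail := tB.support_eq_cons ▸ hzB
      rw [List.mem_cons] at hzB'
      rcases hzB' with rfl | h'
      · rfl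
      · exact absurd h' (hnd.2.2 hzA)
    have hrT : ∀ z, z ∈ r.support → z ∈ P.support → z = x := fun z hz hzP => hprop z hz hzP
    set rrev := r.reverse with hrrev
    have hrrevsup : ∀ z, z ∈ rrev.support → z ∈ r.support := by
      intro z hz; rwa [Walk.support_reverse, List.mem_reverse] at hz
    -- three paths
    have meet2 : ∀ z, z ∈ tA.support → z ∈ rrev.support → z = x := fun z hzA hzr =>
      hrT z (hrrevsup z hzr) (P.support_takeUntil_subset hxP hzA)
    have meet3 : ∀ z, z ∈ tB.reverse.support → z ∈ rrev.support → z = x := by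
      intro z hzB hzr
      rw [Walk.support_reverse, List.mem_reverse] at hzB
      exact hrT z (hrrevsup z hzr) (P.support_dropUntil_subset hxP hzB)
    set W2 := tA.append rrev with hW2def
    set W3 := tB.reverse.append rrev with hW3def
    have hW2 : W2.IsPath := my_append_isPath htAp hr.reverse meet2
    have hW3 : W3.IsPath := my_append_isPath htBp.reverse hr.reverse meet3
    -- transfer to G
    set f := (SimpleGraph.Embedding.induce s (G := G)) with hf
    have hfinj : Function.Injective (f.toHom : s → V) := fun u v huv => Subtype.val_injective huv
    have hwsup : ∀ {u v : s} (q : (G.induce s).Walk u v), w ∉ (q.map f.toHom).support := by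
      intro u v q hmem
      rw [Walk.support_map] at hmem
      obtain ⟨z, _, hz⟩ := List.mem_map.mp hmem
      exact z.2 hz
    have l1 : (tA.length + tB.length) % 2 = 1 := by
      have := hodd ha hb.symm (fun hh => hab hh) (P.map f.toHom)
        (Walk.map_isPath_of_injective hfinj hP) (hwsup P)
      rw [hlenP, ← Walk.length_map f.toHom P]; exact this
    have l2 : (tA.length + r.length) % 2 = 1 := by
      have := hodd ha hcmem.symm (fun hh => hca hh.symm) (W2.map f.toHom)
        (Walk.map_isPath_of_injective hfinj hW2) (hwsup W2)
      have e : tA.length + r.length = (W2.map f.toHom).length := by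
        rw [Walk.length_map, hW2def, Walk.length_append, hrrev, Walk.length_reverse]
      rw [e]; exact this
    have l3 : (tB.length + r.length) % 2 = 1 := by
      have := hodd hb hcmem.symm (fun hh => hcb hh.symm) (W3.map f.toHom)
        (Walk.map_isPath_of_injective hfinj hW3) (hwsup W3)
      have e : tB.length + r.length = (W3.map f.toHom).length := by
        rw [Walk.length_map, hW3def, Walk.length_append, Walk.length_reverse,
          hrrev, Walk.length_reverse]
      rw [e]; exact this
    omega
  -- lower bound
  have hlb : 2 ≤ G.degree w := by
    obtain ⟨v, hv⟩ := Fintype.exists_ne_of_one_lt_card (by omega) w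
    obtain ⟨p⟩ := hconn.preconnected w v
    obtain ⟨u, hu⟩ : ∃ u, G.Adj w u := by
      cases p with
      | nil => exact absurd rfl hv
      | cons h' _ => exact ⟨_, h'⟩
    have hH' : (G.induce {z : V | z ≠ u}).Connected := hdel u
    have hv2 : 0 < ((Finset.univ.erase w).erase u).card := by
      rw [Finset.card_erase_of_mem (Finset.mem_erase.mpr ⟨hu.ne', Finset.mem_univ u⟩),
        Finset.card_erase_of_mem (Finset.mem_univ w), Finset.card_univ]
      omega
    obtain ⟨v2, hv2m⟩ := Finset.card_pos.mp hv2
    rw [Finset.mem_erase, Finset.mem_erase] at hv2m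
    obtain ⟨hv2u, hv2w, -⟩ := hv2m
    obtain ⟨q⟩ := hH'.preconnected ⟨w, hu.ne⟩ ⟨v2, hv2u⟩
    obtain ⟨y, hy⟩ : ∃ y : {z : V | z ≠ u}, G.Adj w ↑y := by
      cases q with
      | nil => exact absurd rfl hv2w
      | cons h' _ => exact ⟨_, h'⟩
    have hsub : ({u, ↑y} : Finset V) ⊆ G.neighborFinset w := by
      intro z hz
      rcases Finset.mem_insert.mp hz with rfl | hz
      · exact (SimpleGraph.mem_neighborFinset _ _ _).mpr hu
      · rw [Finset.mem_singleton] at hz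
        subst hz
        exact (SimpleGraph.mem_neighborFinset _ _ _).mpr hy
    have : ({u, ↑y} : Finset V).card = 2 := Finset.card_pair (fun hh => y.2 hh.symm)
    calc 2 = ({u, ↑y} : Finset V).card := this.symm
      _ ≤ (G.neighborFinset w).card := Finset.card_le_card hsub
      _ = G.degree w := rfl
  omega
end

section
/- Let G be a 2-connected finite simple graph on vertex set V with |V| ≥ 3, and let S ⊆ V be nonempty. Suppose that every vertex of S has degree exactly 2 in G, every connected component of G − S is bipartite, for every connected component A of G − S exactly two edges of G have exactly one endpoint in A, and some S-cycle of G has odd length. Then every S-cycle of G has odd length. -/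
open SimpleGraph

namespace Stmt16Aux

variable {V : Type*} {G : SimpleGraph V}

/-- Edge functional: sum of a vertex function over the two endpoints. -/
def ef (f : V → ZMod 2) : Sym2 V → ZMod 2 :=
  Sym2.lift ⟨fun u v => f u + f v, fun _ _ => add_comm _ _⟩

@[simp] lemma ef_mk (f : V → ZMod 2) (u v : V) : ef f s(u, v) = f u + f v := rfl

lemma telescope (f : V → ZMod 2) : ∀ {x y : V} (w : G.Walk x y),
    (w.edges.map (ef f)).sum = f x + f y := by
  intro x y w
  induction w with
  | nil => simpa using ((by decide : ∀ a : ZMod 2, a + a = 0) _).symm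
  | @cons a b c h p ih =>
    simp only [Walk.edges_cons, List.map_cons, List.sum_cons, ih, ef_mk]
    exact (by decide : ∀ s t u : ZMod 2, (s + t) + (t + u) = s + u) _ _ _

lemma telescope_len (f : V → ZMod 2) : ∀ {x y : V} (w : G.Walk x y),
    (w.edges.map (fun e => 1 + ef f e)).sum = (w.length : ZMod 2) + f x + f y := by
  intro x y w
  induction w with
  | nil => simpa using ((by decide : ∀ a : ZMod 2, a + a = 0) _).symm
  | @cons a b c h p ih =>
    simp only [Walk.edges_cons, List.map_cons, List.sum_cons, ih, ef_mk, Walk.length_cons,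
      Nat.cast_add, Nat.cast_one]
    exact (by decide : ∀ L s t u : ZMod 2, (1 + (s + t)) + (L + t + u) = (L + 1) + s + u) _ _ _ _

lemma const_on_support (f : V → ZMod 2) : ∀ {x y : V} (w : G.Walk x y),
    (∀ e ∈ w.edges, ef f e = 0) → ∀ z ∈ w.support, f z = f x := by
  intro x y w
  induction w with
  | nil =>
    intro _ z hz
    rw [Walk.support_nil, List.mem_singleton] at hz
    subst hz; rfl
  | @cons a b c h p ih =>
    intro he z hz
    rw [Walk.support_cons, List.mem_cons] at hz
    rcases hz with rfl | hz
    · rfl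
    · have hab : f b = f a := by
        have h0 := he s(a, b) (by simp [Walk.edges_cons])
        rw [ef_mk] at h0
        revert h0
        exact (by decide : ∀ s t : ZMod 2, s + t = 0 → t = s) (f a) (f b)
      rw [ih (fun e hee => he e (by simp [Walk.edges_cons, hee])) z hz, hab]

lemma cycle_edges_at [Fintype V] [DecidableEq V] [DecidableRel G.Adj] {v w : V} {c : G.Walk v v}
    (hc : c.IsCycle) (hdeg : G.degree v = 2) (hadj : G.Adj v w) : s(v, w) ∈ c.edges := by
  have hlen := hc.three_le_length
  cases c with
  | nil => exact absurd hc Walk.IsCycle.not_of_nil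
  | @cons _ x _ h p =>
    obtain ⟨hp, hve⟩ := (Walk.cons_isCycle_iff _ _).mp hc
    obtain ⟨x', q, h', hEq⟩ := Walk.exists_cons_eq_concat h p
    have hedges : s(v, x) :: p.edges = q.edges ++ [s(x', v)] := by
      rw [← Walk.edges_cons h p, hEq, Walk.edges_concat, List.concat_eq_append]
    have hxe : s(v, x) ∈ (Walk.cons h p).edges := by simp
    have hx'e : s(v, x') ∈ (Walk.cons h p).edges := by
      rw [Walk.edges_cons, hedges]
      exact List.mem_append_right _ (by simp [Sym2.eq_swap])
    have hne : x ≠ x' := by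
      rintro rfl
      have hpne : p.edges ≠ [] := by
        intro hnil
        have h1 : p.length = 0 := by
          rw [← Walk.length_edges, hnil]; rfl
        have h2 : (Walk.cons h p).length = p.length + 1 := rfl
        omega
      have hgl : (s(v, x) :: p.edges).getLast? = some s(x, v) := by
        rw [hedges, List.getLast?_append_cons]
        rfl
      obtain ⟨b, l', hpl⟩ := List.exists_cons_of_ne_nil hpne
      rw [hpl, List.getLast?_cons_cons] at hgl
      obtain ⟨hne', heq⟩ := List.mem_getLast?_eq_getLast
        (show s(x, v) ∈ (b :: l').getLast? by rw [hgl]; rfl)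
      have h2 : s(x, v) ∈ p.edges := by
        rw [hpl, heq]
        exact List.getLast_mem hne'
      rw [Sym2.eq_swap] at h2
      exact hve h2
    have hsub : ({x, x'} : Finset V) ⊆ G.neighborFinset v := by
      intro z hz
      rcases Finset.mem_insert.mp hz with rfl | hz
      · simpa using h
      · rw [Finset.mem_singleton] at hz; subst hz; simpa using h'.symm
    have hcard : G.neighborFinset v = {x, x'} := by
      refine (Finset.eq_of_subset_of_card_le hsub ?_).symm
      rw [Finset.card_insert_of_notMem (by simpa using hne), Finset.card_singleton]
      have : (G.neighborFinset v).card = G.degree v := rfl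
      omega
    have hw : w ∈ ({x, x'} : Finset V) := by
      rw [← hcard]; simpa using hadj
    rcases Finset.mem_insert.mp hw with rfl | hw
    · exact hxe
    · rw [Finset.mem_singleton] at hw; subst hw; exact hx'e

lemma cycle_edges_at' [Fintype V] [DecidableEq V] [DecidableRel G.Adj] {a v w : V} {c : G.Walk a a}
    (hc : c.IsCycle) (hv : v ∈ c.support) (hdeg : G.degree v = 2) (hadj : G.Adj v w) :
    s(v, w) ∈ c.edges :=
  (c.rotate_edges v hv).mem_iff.mp (cycle_edges_at (hc.rotate hv) hdeg hadj)


lemma exists_f [Fintype V] (G : SimpleGraph V) (S : Set V)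
    (hbip : ∀ C : (G.induce Sᶜ).ConnectedComponent,
      ((G.induce Sᶜ).induce C.supp).Colorable 2) :
    ∃ f : V → ZMod 2, ∀ u v, G.Adj u v → u ∉ S → v ∉ S → f u ≠ f v := by
  classical
  have col : ∀ D : (G.induce Sᶜ).ConnectedComponent,
      ((G.induce Sᶜ).induce D.supp).Coloring (Fin 2) := fun D => (hbip D).some
  have col_eval : ∀ (x : ↥(Sᶜ)) (D : (G.induce Sᶜ).ConnectedComponent) (hx : x ∈ D.supp),
      col D ⟨x, hx⟩ = col ((G.induce Sᶜ).connectedComponentMk x) ⟨x, rfl⟩ := by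
    intro x D hx
    have h : (G.induce Sᶜ).connectedComponentMk x = D := hx
    subst h
    rfl
  refine ⟨fun v => if hv : v ∈ S then 0 else
      (((col ((G.induce Sᶜ).connectedComponentMk ⟨v, hv⟩)) ⟨⟨v, hv⟩, rfl⟩ : Fin 2).val : ZMod 2),
    ?_⟩
  intro u v huv hu hv
  simp only [dif_neg hu, dif_neg hv]
  have hadj' : (G.induce Sᶜ).Adj ⟨u, hu⟩ ⟨v, hv⟩ := huv
  have hD : (G.induce Sᶜ).connectedComponentMk (⟨v, hv⟩ : ↥(Sᶜ)) =
      (G.induce Sᶜ).connectedComponentMk ⟨u, hu⟩ :=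
    ConnectedComponent.sound hadj'.symm.reachable
  have hv'supp : (⟨v, hv⟩ : ↥(Sᶜ)) ∈ ((G.induce Sᶜ).connectedComponentMk ⟨u, hu⟩).supp := hD
  have humem : (⟨u, hu⟩ : ↥(Sᶜ)) ∈ ((G.induce Sᶜ).connectedComponentMk ⟨u, hu⟩).supp := rfl
  have hadj2 : ((G.induce Sᶜ).induce ((G.induce Sᶜ).connectedComponentMk ⟨u, hu⟩).supp).Adj
      ⟨⟨u, hu⟩, humem⟩ ⟨⟨v, hv⟩, hv'supp⟩ := hadj'
  have hvalid := (col ((G.induce Sᶜ).connectedComponentMk ⟨u, hu⟩)).valid hadj2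
  rw [col_eval ⟨v, hv⟩ _ hv'supp] at hvalid
  revert hvalid
  generalize (col ((G.induce Sᶜ).connectedComponentMk ⟨u, hu⟩)) ⟨⟨u, hu⟩, rfl⟩ = A
  generalize (col ((G.induce Sᶜ).connectedComponentMk ⟨v, hv⟩)) ⟨⟨v, hv⟩, rfl⟩ = B
  revert A B
  decide


lemma key [Fintype V] [DecidableEq V] {G : SimpleGraph V} [DecidableRel G.Adj] (S : Set V)
    (hconn : G.Connected)
    (hdeg : ∀ w ∈ S, G.degree w = 2)
    (hout : ∀ C : (G.induce Sᶜ).ConnectedComponent,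
      {e ∈ G.edgeSet | ∃ x y : V, e = s(x, y) ∧
        x ∈ Subtype.val '' C.supp ∧ y ∉ Subtype.val '' C.supp}.ncard = 2)
    (f : V → ZMod 2) (hf : ∀ u v, G.Adj u v → u ∉ S → v ∉ S → f u ≠ f v)
    {a : V} (c : G.Walk a a) (hc : c.IsCycle) (hSc : ∃ w ∈ S, w ∈ c.support) :
    (c.length : ZMod 2) =
      ∑ e ∈ Set.Finite.toFinset (Set.toFinite {e : Sym2 V | e ∈ G.edgeSet ∧ ∃ x ∈ S, x ∈ e}),
        (1 + ef f e) := by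
  classical
  obtain ⟨s₀, hs₀S, hs₀⟩ := hSc
  have hnodup : c.edges.Nodup := hc.edges_nodup
  -- the closure set
  set X : Set V := {v | (v ∈ S → v ∈ c.support) ∧
      (∀ hv : v ∉ S, ∃ u, ∃ hu : u ∈ Sᶜ, u ∈ c.support ∧
        (G.induce Sᶜ).Reachable ⟨u, hu⟩ ⟨v, hv⟩)} with hXdef
  have hXclosed : ∀ u ∈ X, ∀ v, G.Adj u v → v ∈ X := by
    intro u hu v huv
    by_cases hus : u ∈ S
    · have husupp : u ∈ c.support := hu.1 hus
      have hedge : s(u, v) ∈ c.edges := cycle_edges_at' hc husupp (hdeg u hus) huv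
      have hvsupp : v ∈ c.support := Walk.snd_mem_support_of_mem_edges c hedge
      exact ⟨fun _ => hvsupp, fun hv => ⟨v, hv, hvsupp, Reachable.refl _⟩⟩
    · obtain ⟨u₁, hu₁c, hu₁s, hreach⟩ := hu.2 hus
      by_cases hvs : v ∈ S
      · -- the cut argument
        set D := (G.induce Sᶜ).connectedComponentMk ⟨u₁, hu₁c⟩ with hDdef
        set A : Set V := Subtype.val '' D.supp with hAdef
        have hASc : A ⊆ Sᶜ := by
          rintro _ ⟨⟨z, hz⟩, _, rfl⟩
          exact hz
        have huA : u ∈ A :=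
          ⟨⟨u, hus⟩, (ConnectedComponent.sound hreach).symm, rfl⟩
        have hu₁A : u₁ ∈ A := ⟨⟨u₁, hu₁c⟩, rfl, rfl⟩
        have hvA : v ∉ A := fun h => (hASc h) hvs
        have hs₀A : s₀ ∉ A := fun h => (hASc h) hs₀S
        set χ : V → ZMod 2 := fun z => if z ∈ A then 1 else 0 with hχdef
        set B : Set (Sym2 V) := {e ∈ G.edgeSet | ∃ x y : V, e = s(x, y) ∧
            x ∈ A ∧ y ∉ A} with hBdef
        have hB2 : B.ncard = 2 := hout D
        have hmemB : ∀ x y : V, G.Adj x y → x ∈ A → y ∉ A → s(x, y) ∈ B := by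
          intro x y hxy hxA hyA
          exact ⟨hxy, x, y, rfl, hxA, hyA⟩
        -- crossing edges of the cycle are in B
        have hBof : ∀ e, e ∈ c.edges → ef χ e ≠ 0 → e ∈ B := by
          intro e
          induction e using Sym2.ind with
          | _ x y =>
            intro hecc hecne
            have hxy : G.Adj x y := Walk.edges_subset_edgeSet c hecc
            rw [ef_mk] at hecne
            by_cases hxA : x ∈ A
            · by_cases hyA : y ∈ A
              · refine absurd ?_ hecne
                simp only [hχdef, if_pos hxA, if_pos hyA]
                decide
              · exact hmemB x y hxy hxA hyA
            · by_cases hyA : y ∈ A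
              · rw [Sym2.eq_swap]
                exact hmemB y x hxy.symm hyA hxA
              · refine absurd ?_ hecne
                simp only [hχdef, if_neg hxA, if_neg hyA]
                decide
        -- there is a crossing edge on the cycle
        have hex : ∃ e ∈ c.edges, ef χ e ≠ 0 := by
          by_contra hno
          push_neg at hno
          have h1 := const_on_support χ c hno u₁ hu₁s
          have h2 := const_on_support χ c hno s₀ hs₀
          have h3 : χ u₁ = χ s₀ := h1.trans h2.symm
          rw [hχdef] at h3
          simp only [if_pos hu₁A, if_neg hs₀A] at h3
          exact one_ne_zero h3
        obtain ⟨ec, hecc, hecne⟩ := hex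
        have hecB : ec ∈ B := hBof ec hecc hecne
        -- both edges of B are on the cycle
        obtain ⟨e₁, e₂, he12, hBeq⟩ := Set.ncard_eq_two.mp hB2
        have hBsub : ∀ e ∈ B, e ∈ c.edges := by
          intro e' heB
          by_contra henot
          have hecne' : ec ≠ e' := fun h => henot (h ▸ hecc)
          have hBpair : B = {ec, e'} := by
            have h1 : ec = e₁ ∨ ec = e₂ := by
              have := hecB; rw [hBeq] at this; simpa using this
            have h2 : e' = e₁ ∨ e' = e₂ := by
              have := heB; rw [hBeq] at this; simpa using this
            rw [hBeq]
            rcases h1 with rfl | rfl <;> rcases h2 with rfl | rfl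
            · exact absurd rfl hecne'
            · rfl
            · exact Set.pair_comm _ _
            · exact absurd rfl hecne'
          have htel : (c.edges.map (ef χ)).sum = 0 := by
            rw [telescope χ c]
            exact (by decide : ∀ a : ZMod 2, a + a = 0) _
          have hsum : ∑ e ∈ c.edges.toFinset, ef χ e = 0 := by
            rw [List.sum_toFinset _ hnodup, htel]
          have hfil : ∑ e ∈ c.edges.toFinset.filter (· ∈ B), ef χ e
              = ∑ e ∈ c.edges.toFinset, ef χ e := by
            apply Finset.sum_filter_of_ne
            intro e he hne0
            exact hBof e (List.mem_toFinset.mp he) hne0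
          have hsingle : c.edges.toFinset.filter (· ∈ B) = {ec} := by
            ext z
            simp only [Finset.mem_filter, List.mem_toFinset, Finset.mem_singleton]
            constructor
            · rintro ⟨hz1, hz2⟩
              rw [hBpair] at hz2
              rcases hz2 with rfl | rfl
              · rfl
              · exact absurd hz1 henot
            · rintro rfl
              exact ⟨hecc, hecB⟩
          have hone : ef χ ec = 1 := by
            obtain ⟨hecE, x, y, hxy, hxA, hyA⟩ := hecB
            rw [hxy, ef_mk, hχdef]
            simp [if_pos hxA, if_neg hyA]
          rw [hsingle, Finset.sum_singleton, hone] at hfil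
          rw [hsum] at hfil
          exact one_ne_zero hfil
        have hsuvB : s(u, v) ∈ B := hmemB u v huv huA hvA
        have hvsupp : v ∈ c.support :=
          Walk.snd_mem_support_of_mem_edges c (hBsub _ hsuvB)
        exact ⟨fun _ => hvsupp, fun hv => absurd hvs hv⟩
      · exact ⟨fun h => absurd h hvs, fun hv =>
          ⟨u₁, hu₁c, hu₁s, hreach.trans (Adj.reachable
            (show (G.induce Sᶜ).Adj ⟨u, hus⟩ ⟨v, hv⟩ from huv))⟩⟩
  -- X is everything
  have walkX : ∀ {x y : V} (w : G.Walk x y), x ∈ X → y ∈ X := by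
    intro x y w
    induction w with
    | nil => exact id
    | cons h p ih => exact fun hx => ih (hXclosed _ hx _ h)
  have hXall : ∀ v, v ∈ X := by
    have hs₀X : s₀ ∈ X := ⟨fun _ => hs₀, fun hv => absurd hs₀S hv⟩
    intro v
    obtain ⟨w⟩ := hconn.preconnected s₀ v
    exact walkX w hs₀X
  -- every S-incident edge is on the cycle
  have hTsub : ∀ e ∈ {e : Sym2 V | e ∈ G.edgeSet ∧ ∃ x ∈ S, x ∈ e}, e ∈ c.edges := by
    rintro e ⟨heE, x, hxS, hxe⟩
    obtain ⟨y, rfl⟩ := Sym2.mem_iff_exists.mp hxe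
    have hadj : G.Adj x y := heE
    have hxsupp : x ∈ c.support := (hXall x).1 hxS
    exact cycle_edges_at' hc hxsupp (hdeg x hxS) hadj
  -- final computation
  have htel : (c.edges.map (fun e => 1 + ef f e)).sum = (c.length : ZMod 2) := by
    rw [telescope_len f c]
    exact (by decide : ∀ L a : ZMod 2, L + a + a = L) _ _
  rw [← htel, ← List.sum_toFinset _ hnodup]
  refine (Finset.sum_subset ?_ ?_).symm
  · intro e he
    rw [Set.Finite.mem_toFinset] at he
    exact List.mem_toFinset.mpr (hTsub e he)
  · intro e he hnotT
    rw [List.mem_toFinset] at he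
    rw [Set.Finite.mem_toFinset] at hnotT
    have heE : e ∈ G.edgeSet := Walk.edges_subset_edgeSet c he
    have hnoS : ∀ x ∈ e, x ∉ S := by
      intro x hxe hxS
      exact hnotT ⟨heE, x, hxS, hxe⟩
    revert heE hnoS
    induction e using Sym2.ind with
    | _ x y =>
      intro heE hnoS
      have hadj : G.Adj x y := heE
      have hne := hf x y hadj (hnoS x (Sym2.mem_mk_left _ _)) (hnoS y (Sym2.mem_mk_right _ _))
      rw [ef_mk]
      revert hne
      generalize f x = A
      generalize f y = B
      revert A B
      decide


lemma odd_iff_cast (n : ℕ) : Odd n ↔ (n : ZMod 2) = 1 := by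
  rw [Nat.odd_iff]
  constructor
  · intro h
    rw [← Nat.div_add_mod n 2, h]
    push_cast
    simp [(by decide : (2 : ZMod 2) = 0)]
  · intro h
    rcases Nat.mod_two_eq_zero_or_one n with h2 | h2
    · exfalso
      rw [← Nat.div_add_mod n 2, h2] at h
      push_cast at h
      rw [(by decide : (2 : ZMod 2) = 0)] at h
      simp at h
    · exact h2

end Stmt16Aux

/-- Suppose `G` is 2-connected, `S ≠ ∅`, every vertex of `S` has degree exactly 2,
every connected component of `G − S` is bipartite, every connected component of `G − S`
has exactly two edges of `G` leaving it, and some `S`-cycle is odd. Then every `S`-cycle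
of `G` is odd. -/
theorem stmt16 {V : Type*} [Fintype V] (G : SimpleGraph V) [DecidableRel G.Adj]
    (hG : TwoConnected G) (S : Set V) (hS : S.Nonempty)
    (hdeg : ∀ w ∈ S, G.degree w = 2)
    (hbip : ∀ C : (G.induce Sᶜ).ConnectedComponent,
      ((G.induce Sᶜ).induce C.supp).Colorable 2)
    (hout : ∀ C : (G.induce Sᶜ).ConnectedComponent,
      {e ∈ G.edgeSet | ∃ x y : V, e = s(x, y) ∧
        x ∈ Subtype.val '' C.supp ∧ y ∉ Subtype.val '' C.supp}.ncard = 2)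
    (hodd : ∃ (a : V) (c : G.Walk a a), c.IsCycle ∧ Odd c.length ∧ ∃ w ∈ S, w ∈ c.support) :
    ∀ (a : V) (c : G.Walk a a), c.IsCycle → (∃ w ∈ S, w ∈ c.support) → Odd c.length := by
  classical
  obtain ⟨f, hf⟩ := Stmt16Aux.exists_f G S hbip
  obtain ⟨a₀, c₀, hc₀, hodd₀, hw₀⟩ := hodd
  intro a c hc hw
  have h₀ := Stmt16Aux.key S hG.2.1 hdeg hout f hf c₀ hc₀ hw₀
  have h₁ := Stmt16Aux.key S hG.2.1 hdeg hout f hf c hc hw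
  rw [← h₀] at h₁
  rw [Stmt16Aux.odd_iff_cast] at hodd₀ ⊢
  rw [h₁, hodd₀]
end

section
/- Let G be a 2-connected finite simple graph on vertex set V with |V| ≥ 3, and let S ⊆ V be nonempty. If G contains no even S-cycle, then every cycle of G that contains a vertex of S contains every vertex of S. -/
open SimpleGraph

namespace StmtAux

variable {V : Type*} {G : SimpleGraph V}

open SimpleGraph.Walk List


lemma end_mem_support_tail {x y : V} (W : G.Walk x y) (h : 1 ≤ W.length) :
    y ∈ W.support.tail := by
  cases W with
  | nil => simp at h
  | cons h' p => simpa using p.end_mem_support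

lemma exists_firstHit {u v : V} (W : G.Walk u v) (T : Set V)
    (hT : ∃ x ∈ W.support, x ∈ T) :
    ∃ (g : V) (W1 : G.Walk u g) (W2 : G.Walk g v),
      W = W1.append W2 ∧ g ∈ T ∧ ∀ x ∈ W1.support, x ∈ T → x = g := by
  classical
  induction W with
  | nil =>
      obtain ⟨x, hx, hxT⟩ := hT
      simp only [Walk.support_nil, List.mem_singleton] at hx
      subst hx
      exact ⟨x, Walk.nil, Walk.nil, by simp, hxT, by simp⟩
  | @cons a b v h p ih =>
      by_cases ha : a ∈ T
      · exact ⟨a, Walk.nil, Walk.cons h p, by simp, ha, by simp⟩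
      · have hT' : ∃ x ∈ p.support, x ∈ T := by
          obtain ⟨x, hx, hxT⟩ := hT
          rcases (by simpa using hx : x = a ∨ x ∈ p.support) with rfl | hx'
          · exact absurd hxT ha
          · exact ⟨x, hx', hxT⟩
        obtain ⟨g, W1, W2, hW, hg, hcond⟩ := ih hT'
        refine ⟨g, Walk.cons h W1, W2, by simp [hW], hg, ?_⟩
        intro x hx hxT
        rcases (by simpa using hx : x = a ∨ x ∈ W1.support) with rfl | hx'
        · exact absurd hxT ha
        · exact hcond x hx' hxT

lemma exists_lastHit {u v : V} (W : G.Walk u v) (T : Set V)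
    (hT : ∃ x ∈ W.support, x ∈ T) :
    ∃ (f : V) (W1 : G.Walk u f) (W2 : G.Walk f v),
      W = W1.append W2 ∧ f ∈ T ∧ ∀ x ∈ W2.support, x ∈ T → x = f := by
  obtain ⟨g, Y1, Y2, hW, hg, hcond⟩ := exists_firstHit W.reverse T (by
    obtain ⟨x, hx, hxT⟩ := hT
    exact ⟨x, by simpa [Walk.support_reverse] using hx, hxT⟩)
  refine ⟨g, Y2.reverse, Y1.reverse, ?_, hg, ?_⟩
  · have := congrArg Walk.reverse hW
    simpa [Walk.reverse_append, Walk.reverse_reverse] using this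
  · intro x hx hxT
    exact hcond x (by simpa [Walk.support_reverse] using hx) hxT

lemma isPath_append {u m v : V} {P : G.Walk u m} {Q : G.Walk m v}
    (hP : P.IsPath) (hQ : Q.IsPath)
    (hdisj : ∀ x ∈ P.support, x ∈ Q.support → x = m) : (P.append Q).IsPath := by
  rw [Walk.isPath_def, Walk.support_append]
  refine List.Nodup.append hP.support_nodup (hQ.support_nodup.sublist (List.tail_sublist _)) ?_
  intro x hx hx'
  have hxQ : x ∈ Q.support := List.mem_of_mem_tail hx'
  have hxm := hdisj x hx hxQ
  subst hxm
  have hm : x ∉ Q.support.tail := by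
    have h0 := hQ.support_nodup
    rw [Q.support_eq_cons] at h0
    exact (List.nodup_cons.mp h0).1
  exact hm hx'

lemma path_edge_length {u v : V} {Q : G.Walk u v} (hQ : Q.IsPath)
    (he : s(u, v) ∈ Q.edges) : Q.length = 1 := by
  cases Q with
  | nil => simp at he
  | @cons _ b _ h p =>
      rw [Walk.edges_cons, List.mem_cons] at he
      rcases he with he | he
      · have hb : v = b := by
          rcases Sym2.eq_iff.mp he with ⟨-, h2⟩ | ⟨h1, -⟩
          · exact h2
          · exact absurd h1 h.ne
        subst hb
        have hnil : p = Walk.nil :=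
          (Walk.isPath_iff_eq_nil (p := p)).mp ((Walk.cons_isPath_iff h p).mp hQ).1
        simp [hnil]
      · exact absurd (Walk.fst_mem_support_of_mem_edges p he)
          ((Walk.cons_isPath_iff h p).mp hQ).2




lemma isCycle_append_reverse {u v : V} {P Q : G.Walk u v}
    (hP : P.IsPath) (hQ : Q.IsPath) (huv : u ≠ v)
    (hdisj : ∀ x, x ∈ P.support → x ∈ Q.support → x = u ∨ x = v)
    (hlen : 3 ≤ P.length + Q.length) : (P.append Q.reverse).IsCycle := by
  cases P with
  | nil => exact absurd rfl huv
  | @cons _ b _ h p =>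
      rw [Walk.cons_append]
      have hp : p.IsPath := hP.of_cons
      have hub : u ∉ p.support := ((Walk.cons_isPath_iff h p).mp hP).2
      rw [Walk.cons_isCycle_iff]
      constructor
      · refine isPath_append hp hQ.reverse ?_
        intro x hx hx'
        have hxQ : x ∈ Q.support := by simpa [Walk.support_reverse] using hx'
        have hxP : x ∈ (Walk.cons h p).support := by simp [hx]
        rcases hdisj x hxP hxQ with rfl | rfl
        · exact absurd hx hub
        · rfl
      · intro hmem
        rw [Walk.edges_append, List.mem_append] at hmem
        rcases hmem with hm | hm
        · exact hub (Walk.fst_mem_support_of_mem_edges p hm)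
        · have hmQ : s(u, b) ∈ Q.edges := by
            rwa [Walk.edges_reverse, List.mem_reverse] at hm
          have hbQ : b ∈ Q.support := Walk.snd_mem_support_of_mem_edges Q hmQ
          have hbP : b ∈ (Walk.cons h p).support := by simp
          rcases hdisj b hbP hbQ with hbu | hbv
          · exact h.ne hbu.symm
          · subst hbv
            have h1 : Q.length = 1 := path_edge_length hQ hmQ
            have h2 : p = Walk.nil := (Walk.isPath_iff_eq_nil (p := p)).mp hp
            rw [h2] at hlen
            simp [h1] at hlen

lemma cycle_prefix_isPath {a b : V} {c : G.Walk a a} (hc : c.IsCycle)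
    {W1 : G.Walk a b} {W2 : G.Walk b a} (he : c = W1.append W2)
    (h2 : 1 ≤ W2.length) : W1.IsPath := by
  have htail : c.support.tail = W1.support.tail ++ W2.support.tail := by
    rw [he, Walk.tail_support_append]
  have hnd : c.support.tail.Nodup := hc.support_nodup
  rw [htail] at hnd
  have ha2 : a ∈ W2.support.tail := end_mem_support_tail W2 h2
  rw [Walk.isPath_def, Walk.support_eq_cons, List.nodup_cons]
  exact ⟨fun haW1 => (List.disjoint_of_nodup_append hnd) haW1 ha2, hnd.of_append_left⟩

lemma cycle_suffix_isPath {a b : V} {c : G.Walk a a} (hc : c.IsCycle)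
    {W1 : G.Walk a b} {W2 : G.Walk b a} (he : c = W1.append W2)
    (h1 : 1 ≤ W1.length) : W2.IsPath := by
  have htail : c.support.tail = W1.support.tail ++ W2.support.tail := by
    rw [he, Walk.tail_support_append]
  have hnd : c.support.tail.Nodup := hc.support_nodup
  rw [htail] at hnd
  have hb1 : b ∈ W1.support.tail := end_mem_support_tail W1 h1
  rw [Walk.isPath_def, Walk.support_eq_cons, List.nodup_cons]
  exact ⟨fun hbW2 => (List.disjoint_of_nodup_append hnd) hb1 hbW2, hnd.of_append_right⟩

lemma length_rotateX [DecidableEq V] {b u : V} (c : G.Walk b b) (h : u ∈ c.support) :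
    (c.rotate u h).length = c.length := by
  exact Walk.length_rotate c u h

lemma mem_rotate_support [DecidableEq V] {b u : V} {c : G.Walk b b} (hlen : 1 ≤ c.length) (h : u ∈ c.support)
    {x : V} : x ∈ (c.rotate u h).support ↔ x ∈ c.support := by
  have hr := (Walk.support_rotate c u h).mem_iff (a := x)
  rw [Walk.support_eq_cons c, Walk.support_eq_cons (c.rotate u h), List.mem_cons, List.mem_cons, hr]
  have hu : u = b ∨ u ∈ c.support.tail := by
    rwa [Walk.support_eq_cons c, List.mem_cons] at h
  constructor
  · rintro (rfl | hx)
    · exact hu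
    · exact Or.inr hx
  · rintro (rfl | hx)
    · exact Or.inr (end_mem_support_tail c hlen)
    · exact Or.inr hx




lemma walk_length_pos {x y : V} (W : G.Walk x y) (h : x ≠ y) : 1 ≤ W.length :=
  Nat.one_le_iff_ne_zero.mpr fun h0 => h (Walk.eq_of_length_eq_zero h0)

lemma cycle_split [DecidableEq V] {b : V} {c : G.Walk b b} (hc : c.IsCycle) {p q : V}
    (hp : p ∈ c.support) (hq : q ∈ c.support) (hpq : p ≠ q) :
    ∃ (A : G.Walk p q) (B : G.Walk q p),
      A.IsPath ∧ B.IsPath ∧ A.length + B.length = c.length ∧ 1 ≤ A.length ∧ 1 ≤ B.length ∧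
      (∀ x ∈ A.support, x ∈ c.support) ∧ (∀ x ∈ B.support, x ∈ c.support) ∧
      (∀ x ∈ c.support, x ∈ A.support ∨ x ∈ B.support) ∧
      (∀ x, x ∈ A.support → x ∈ B.support → x = p ∨ x = q) := by
  have hlen3 := hc.three_le_length
  have hlen1 : 1 ≤ c.length := by omega
  have hc' : (c.rotate p hp).IsCycle := hc.rotate hp
  have hmem : ∀ x : V, x ∈ (c.rotate p hp).support ↔ x ∈ c.support :=
    fun x => mem_rotate_support hlen1 hp
  have hq' : q ∈ (c.rotate p hp).support := (hmem q).mpr hq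
  set c' := c.rotate p hp with hc'def
  set A := c'.takeUntil q hq' with hA
  set B := c'.dropUntil q hq' with hB
  have hspec : A.append B = c' := Walk.take_spec c' hq'
  have hAlen : 1 ≤ A.length := walk_length_pos A hpq
  have hBlen : 1 ≤ B.length := walk_length_pos B hpq.symm
  have hApath : A.IsPath := cycle_prefix_isPath hc' hspec.symm hBlen
  have hBpath : B.IsPath := cycle_suffix_isPath hc' hspec.symm hAlen
  have hlensum : A.length + B.length = c.length := by
    have := congrArg Walk.length hspec
    rw [Walk.length_append] at this
    rw [this, hc'def, length_rotateX]
  have hsupp : c'.support = A.support ++ B.support.tail := by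
    rw [← hspec, Walk.support_append]
  have htail : c'.support.tail = A.support.tail ++ B.support.tail := by
    rw [← hspec, Walk.tail_support_append]
  have hnd : (A.support.tail ++ B.support.tail).Nodup := by
    rw [← htail]; exact hc'.support_nodup
  refine ⟨A, B, hApath, hBpath, hlensum, hAlen, hBlen, ?_, ?_, ?_, ?_⟩
  · intro x hx
    rw [← hmem x, hsupp]
    exact List.mem_append_left _ hx
  · intro x hx
    rw [← hmem x, hsupp]
    have hx2 : x = q ∨ x ∈ B.support.tail := by
      rwa [Walk.support_eq_cons B, List.mem_cons] at hx
    rcases hx2 with rfl | hx'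
    · exact List.mem_append_left _ (Walk.end_mem_support A)
    · exact List.mem_append_right _ hx'
  · intro x hx
    rw [← hmem x, hsupp, List.mem_append] at hx
    rcases hx with hx | hx
    · exact Or.inl hx
    · exact Or.inr (List.mem_of_mem_tail hx)
  · intro x hxA hxB
    by_cases hxp : x = p
    · exact Or.inl hxp
    by_cases hxq : x = q
    · exact Or.inr hxq
    exfalso
    have hxA' : x ∈ A.support.tail := by
      have : x = p ∨ x ∈ A.support.tail := by
        rwa [Walk.support_eq_cons A, List.mem_cons] at hxA
      rcases this with h' | h'
      · exact absurd h' hxp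
      · exact h'
    have hxB' : x ∈ B.support.tail := by
      have : x = q ∨ x ∈ B.support.tail := by
        rwa [Walk.support_eq_cons B, List.mem_cons] at hxB
      rcases this with h' | h'
      · exact absurd h' hxq
      · exact h'
    exact (List.disjoint_of_nodup_append hnd) hxA' hxB'

lemma exists_path_avoiding [DecidableEq V] (h2 : ∀ x : V, (G.induce {w | w ≠ x}).Connected)
    {x u v : V} (hu : u ≠ x) (hv : v ≠ x) :
    ∃ P : G.Walk u v, P.IsPath ∧ x ∉ P.support := by
  obtain ⟨W⟩ := (h2 x).preconnected ⟨u, hu⟩ ⟨v, hv⟩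
  let emb : G.induce {w : V | w ≠ x} ↪g G := SimpleGraph.Embedding.induce _
  let W' := W.map emb.toHom
  refine ⟨W'.bypass, Walk.bypass_isPath _, fun hx => ?_⟩
  have hx' := Walk.support_bypass_subset _ hx
  replace hx' : x ∈ W.support.map emb.toHom := by rw [← Walk.support_map]; exact hx'
  obtain ⟨y, hy, hyx⟩ := List.mem_map.mp hx'
  exact y.2 hyx

lemma exists_third [Fintype V] [DecidableEq V] (hcard : 3 ≤ Fintype.card V) (u v : V) : ∃ t : V, t ≠ u ∧ t ≠ v := by
  classical
  have hne : ({u, v}ᶜ : Finset V).Nonempty := by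
    rw [← Finset.card_pos, Finset.card_compl]
    have h2 : ({u, v} : Finset V).card ≤ 2 := by
      refine le_trans (Finset.card_insert_le _ _) ?_
      simp
    omega
  obtain ⟨t, ht⟩ := hne
  simp only [Finset.mem_compl, Finset.mem_insert, Finset.mem_singleton, not_or] at ht
  exact ⟨t, ht.1, ht.2⟩

lemma even_of_odd_sum {l1 l2 : ℕ} (k : ℕ) (h : ¬ Even (l1 + l2)) :
    Even (k + l1) ∨ Even (k + l2) := by
  simp only [Nat.even_iff] at h ⊢
  omega

lemma exists_other_on_cycle {a : V} {c : G.Walk a a} (hc : c.IsCycle) (p : V) :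
    ∃ z ∈ c.support, z ≠ p := by
  have h3 := hc.three_le_length
  have hlt : c.support.tail.length = c.length := by
    rw [List.length_tail, Walk.length_support]; omega
  obtain ⟨x, y, t, hm⟩ : ∃ x y t, c.support.tail = x :: y :: t := by
    match hm : c.support.tail with
    | [] => rw [hm] at hlt; simp at hlt; omega
    | [x] => rw [hm] at hlt; simp at hlt; omega
    | x :: y :: t => exact ⟨x, y, t, rfl⟩
  have hnd := hc.support_nodup
  rw [hm] at hnd
  have hxy : x ≠ y := fun h => (List.nodup_cons.mp hnd).1 (by rw [h]; exact List.mem_cons_self)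
  have hxm : x ∈ c.support := List.mem_of_mem_tail (by rw [hm]; exact List.mem_cons_self)
  have hym : y ∈ c.support := List.mem_of_mem_tail
    (by rw [hm]; exact List.mem_cons_of_mem _ (List.mem_cons_self))
  by_cases hxp : x = p
  · exact ⟨y, hym, by rw [← hxp]; exact hxy.symm⟩
  · exact ⟨x, hxm, hxp⟩




lemma build_even_fan [DecidableEq V] {a w p q : V} {c : G.Walk a a}
    (hcyc : c.IsCycle) (hodd : ¬ Even c.length)
    {A : G.Walk w p} {B : G.Walk w q} (hA : A.IsPath) (hB : B.IsPath)
    (hAC : ∀ x ∈ A.support, x ∈ c.support → x = p)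
    (hBC : ∀ x ∈ B.support, x ∈ c.support → x = q)
    (hAB : ∀ x, x ∈ A.support → x ∈ B.support → x = w)
    (hwc : w ∉ c.support) (hpc : p ∈ c.support) (hqc : q ∈ c.support) (hpq : p ≠ q) :
    ∃ Z : G.Walk w w, Z.IsCycle ∧ Even Z.length := by
  obtain ⟨γ1, γ2, hγ1, hγ2, hγsum, hγ1len, hγ2len, hγ1C, hγ2C, -, -⟩ :=
    cycle_split hcyc hpc hqc hpq
  have hwp : w ≠ p := fun h => hwc (h ▸ hpc)
  have hwq : w ≠ q := fun h => hwc (h ▸ hqc)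
  have hAlen : 1 ≤ A.length := walk_length_pos A hwp
  have hBlen : 1 ≤ B.length := walk_length_pos B hwq
  -- build for a given arc γ : p → q
  have key : ∀ (γ : G.Walk p q), γ.IsPath → (∀ x ∈ γ.support, x ∈ c.support) →
      1 ≤ γ.length → ∃ Z : G.Walk w w, Z.IsCycle ∧ Z.length = A.length + γ.length + B.length := by
    intro γ hγ hγC hγlen
    have hPpath : (A.append γ).IsPath := by
      refine isPath_append hA hγ ?_
      intro x hx hx'
      exact hAC x hx (hγC x hx')
    have hcycZ : ((A.append γ).append B.reverse).IsCycle := by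
      refine isCycle_append_reverse hPpath hB hwq ?_ ?_
      · intro x hx hxB
        rw [Walk.mem_support_append_iff] at hx
        rcases hx with hx | hx
        · exact Or.inl (hAB x hx hxB)
        · exact Or.inr (hBC x hxB (hγC x hx))
      · rw [Walk.length_append]
        omega
    refine ⟨(A.append γ).append B.reverse, hcycZ, ?_⟩
    rw [Walk.length_append, Walk.length_append, Walk.length_reverse]
  rcases even_of_odd_sum (A.length + B.length) (by rwa [hγsum]) with he | he
  · obtain ⟨Z, hZ, hZl⟩ := key γ1 hγ1 hγ1C hγ1len
    refine ⟨Z, hZ, ?_⟩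
    rw [hZl, show A.length + γ1.length + B.length = A.length + B.length + γ1.length from by omega]
    exact he
  · obtain ⟨Z, hZ, hZl⟩ := key γ2.reverse hγ2.reverse
      (fun x hx => hγ2C x (by rwa [Walk.support_reverse, List.mem_reverse] at hx))
      (by rwa [Walk.length_reverse])
    refine ⟨Z, hZ, ?_⟩
    rw [hZl, Walk.length_reverse,
      show A.length + γ2.length + B.length = A.length + B.length + γ2.length from by omega]
    exact he



lemma build_even_single [DecidableEq V] {a w q f g : V} {c : G.Walk a a}
    (hcyc : c.IsCycle) (hodd : ¬ Even c.length)
    {A B : G.Walk w q} (hA : A.IsPath) (hB : B.IsPath)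
    (hAC : ∀ x ∈ A.support, x ∈ c.support → x = q)
    (hBC : ∀ x ∈ B.support, x ∈ c.support → x = q)
    (hAB : ∀ x, x ∈ A.support → x ∈ B.support → x = w ∨ x = q)
    (hwc : w ∉ c.support) (hqc : q ∈ c.support)
    (hgc : g ∈ c.support) (hgq : g ≠ q)
    {F : G.Walk f g} (hF : F.IsPath) (hfA : f ∈ A.support) (hfq : f ≠ q)
    (hFC : ∀ x ∈ F.support, x ∈ c.support → x = g)
    (hFA : ∀ x ∈ F.support, x ∈ A.support → x = f)
    (hFB : ∀ x ∈ F.support, x ∈ B.support → x = f) :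
    ∃ Z : G.Walk w w, Z.IsCycle ∧ Even Z.length := by
  have hwq : w ≠ q := fun h => hwc (h ▸ hqc)
  have hwg : w ≠ g := fun h => hwc (h ▸ hgc)
  have hfg : f ≠ g := fun h => hfq (hAC f hfA (h ▸ hgc))
  have hFlen : 1 ≤ F.length := walk_length_pos F hfg
  have hBlen : 1 ≤ B.length := walk_length_pos B hwq
  set A1 := A.takeUntil f hfA with hA1def
  set A2 := A.dropUntil f hfA with hA2def
  have hAspec : A1.append A2 = A := Walk.take_spec A hfA
  have hA1 : A1.IsPath := hA.takeUntil hfA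
  have hA1sub : ∀ x ∈ A1.support, x ∈ A.support := fun x hx =>
    Walk.support_takeUntil_subset A hfA hx
  have hqA1 : q ∉ A1.support := by
    intro hq1
    have hsupp : A.support = A1.support ++ A2.support.tail := by
      rw [← hAspec, Walk.support_append]
    have hnd := hA.support_nodup
    rw [hsupp] at hnd
    have hqA2 : q ∈ A2.support.tail := by
      have : q = f ∨ q ∈ A2.support.tail := by
        rw [← List.mem_cons, ← Walk.support_eq_cons A2]
        exact Walk.end_mem_support A2
      rcases this with h' | h'
      · exact absurd h'.symm hfq
      · exact h'
    exact (List.disjoint_of_nodup_append hnd) hq1 hqA2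
  obtain ⟨γ1, γ2, hγ1, hγ2, hγsum, hγ1len, hγ2len, hγ1C, hγ2C, -, -⟩ :=
    cycle_split hcyc hqc hgc (Ne.symm hgq)
  have hQpath : (A1.append F).IsPath := by
    refine isPath_append hA1 hF ?_
    intro x hx hx'
    exact hFA x hx' (hA1sub x hx)
  have key : ∀ (γ : G.Walk q g), γ.IsPath → (∀ x ∈ γ.support, x ∈ c.support) →
      1 ≤ γ.length →
      ∃ Z : G.Walk w w, Z.IsCycle ∧
        Z.length = B.length + γ.length + (A1.length + F.length) := by
    intro γ hγ hγC hγlen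
    have hPpath : (B.append γ).IsPath := by
      refine isPath_append hB hγ ?_
      intro x hx hx'
      exact hBC x hx (hγC x hx')
    have hcycZ : ((B.append γ).append (A1.append F).reverse).IsCycle := by
      refine isCycle_append_reverse hPpath hQpath hwg ?_ ?_
      · intro x hx hx'
        rw [Walk.mem_support_append_iff] at hx hx'
        rcases hx with hx | hx <;> rcases hx' with hx' | hx'
        · rcases hAB x (hA1sub x hx') hx with h' | h'
          · exact Or.inl h'
          · exact absurd (h' ▸ hx') hqA1
        · have hxf : x = f := hFB x hx' hx
          subst hxf
          rcases hAB x hfA hx with h' | h'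
          · exact Or.inl h'
          · exact absurd h' hfq
        · exact absurd (hAC x (hA1sub x hx') (hγC x hx)) (by
            intro h'
            exact hqA1 (h' ▸ hx'))
        · exact Or.inr (hFC x hx' (hγC x hx))
      · rw [Walk.length_append, Walk.length_append]
        omega
    refine ⟨_, hcycZ, ?_⟩
    rw [Walk.length_append, Walk.length_append, Walk.length_reverse, Walk.length_append]
  rcases even_of_odd_sum (B.length + A1.length + F.length) (by rwa [hγsum]) with he | he
  · obtain ⟨Z, hZ, hZl⟩ := key γ1 hγ1 hγ1C hγ1len
    refine ⟨Z, hZ, ?_⟩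
    rw [hZl, show B.length + γ1.length + (A1.length + F.length)
      = B.length + A1.length + F.length + γ1.length from by omega]
    exact he
  · obtain ⟨Z, hZ, hZl⟩ := key γ2.reverse hγ2.reverse
      (fun x hx => hγ2C x (by rwa [Walk.support_reverse, List.mem_reverse] at hx))
      (by rwa [Walk.length_reverse])
    refine ⟨Z, hZ, ?_⟩
    rw [hZl, Walk.length_reverse, show B.length + γ2.length + (A1.length + F.length)
      = B.length + A1.length + F.length + γ2.length from by omega]
    exact he



lemma cycle_through_pair [Fintype V] [DecidableEq V] (hconn : G.Connected)
    (h2 : ∀ x : V, (G.induce {w | w ≠ x}).Connected) (hcard : 3 ≤ Fintype.card V) :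
    ∀ u v : V, u ≠ v →
      ∃ (b : V) (D : G.Walk b b), D.IsCycle ∧ u ∈ D.support ∧ v ∈ D.support := by
  suffices H : ∀ (n : ℕ) (u v : V), u ≠ v → G.dist u v = n →
      ∃ (b : V) (D : G.Walk b b), D.IsCycle ∧ u ∈ D.support ∧ v ∈ D.support by
    intro u v huv; exact H _ u v huv rfl
  intro n
  induction n using Nat.strong_induction_on with
  | _ n ih =>
  intro u v huv hdist
  match n, hdist with
  | 0, hdist => exact absurd (hconn.dist_eq_zero_iff.mp hdist) huv
  | 1, hdist =>
    have hadj : G.Adj u v := SimpleGraph.dist_eq_one_iff_adj.mp hdist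
    obtain ⟨t, htu, htv⟩ := exists_third hcard u v
    obtain ⟨P0, hP0, huP0⟩ := exists_path_avoiding h2 (Ne.symm huv) htu (v := t)
    cases P0 with
    | nil => exact absurd rfl (Ne.symm htv)
    | @cons _ z _ h' p =>
      have hzu : z ≠ u := by
        intro h
        exact huP0 (by rw [← h]; simp)
      obtain ⟨Q, hQ, hvQ⟩ := exists_path_avoiding h2 h'.ne' huv (u := z) (v := u)
      have hcyc : (Walk.cons hadj (Walk.cons h' Q)).IsCycle := by
        rw [Walk.cons_isCycle_iff]
        constructor
        · rw [Walk.cons_isPath_iff]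
          exact ⟨hQ, hvQ⟩
        · rw [Walk.edges_cons, List.mem_cons]
          rintro (he | he)
          · rcases Sym2.eq_iff.mp he with ⟨h1, -⟩ | ⟨h1, -⟩
            · exact huv h1
            · exact hzu h1.symm
          · exact hvQ (Walk.snd_mem_support_of_mem_edges Q he)
      exact ⟨u, _, hcyc, Walk.start_mem_support _, by simp⟩
  | (n + 2), hdist =>
    obtain ⟨W, hWlen⟩ := hconn.exists_walk_length_eq_dist u v
    cases hWr : W.reverse with
    | nil =>
      have := congrArg Walk.length hWr
      rw [Walk.length_reverse, hWlen] at this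
      simp [hdist] at this
      exact absurd rfl huv
    | @cons _ z _ h' W' =>
      have hWl' : W'.length = n + 1 := by
        have := congrArg Walk.length hWr
        rw [Walk.length_reverse, hWlen, hdist] at this
        simpa using this.symm
      have hdistz_le : G.dist u z ≤ n + 1 := by
        have := SimpleGraph.dist_le W'.reverse
        rwa [Walk.length_reverse, hWl'] at this
      have hdistz_ge : n + 1 ≤ G.dist u z := by
        obtain ⟨W2, hW2⟩ := hconn.exists_walk_length_eq_dist u z
        have := SimpleGraph.dist_le (W2.append (Walk.cons h'.symm Walk.nil))
        rw [Walk.length_append, hW2, hdist] at this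
        simpa using this
      have hdistz : G.dist u z = n + 1 := le_antisymm hdistz_le hdistz_ge
      have huz : u ≠ z := by
        rintro rfl
        rw [SimpleGraph.dist_self] at hdistz
        omega
      obtain ⟨b, D, hD, huD, hzD⟩ := ih (n + 1) (by omega) u z huz hdistz
      by_cases hvD : v ∈ D.support
      · exact ⟨b, D, hD, huD, hvD⟩
      obtain ⟨P, hP, hzP⟩ := exists_path_avoiding h2 h'.ne huz (u := v) (v := u)
      obtain ⟨y, Q, R, hPsplit, hyD, hQhit⟩ :=
        exists_firstHit P {x | x ∈ D.support} ⟨u, P.end_mem_support, huD⟩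
      have hQpath : Q.IsPath := Walk.IsPath.of_append_left (hPsplit ▸ hP)
      have hQsub : ∀ x ∈ Q.support, x ∈ P.support := by
        intro x hx
        rw [hPsplit]
        exact Walk.subset_support_append_left _ _ hx
      have hzQ : z ∉ Q.support := fun hx => hzP (hQsub z hx)
      have hzy : z ≠ y := fun h => hzQ (h ▸ Q.end_mem_support)
      have hyD' : y ∈ D.support := hyD
      obtain ⟨δ1, δ2, hδ1, hδ2, -, -, -, hδ1D, hδ2D, hδcover, -⟩ :=
        cycle_split hD hzD hyD' hzy
      have key : ∀ (δ : G.Walk z y), δ.IsPath → (∀ x ∈ δ.support, x ∈ D.support) →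
          u ∈ δ.support →
          ∃ (b : V) (Z : G.Walk b b), Z.IsCycle ∧ u ∈ Z.support ∧ v ∈ Z.support := by
        intro δ hδ hδD huδ
        have hinner : (δ.append Q.reverse).IsPath := by
          refine isPath_append hδ hQpath.reverse ?_
          intro x hx hx'
          exact hQhit x (by rwa [Walk.support_reverse, List.mem_reverse] at hx') (hδD x hx)
        have hcyc : (Walk.cons h' (δ.append Q.reverse)).IsCycle := by
          rw [Walk.cons_isCycle_iff]
          refine ⟨hinner, ?_⟩
          rw [Walk.edges_append, List.mem_append]
          rintro (he | he)
          · exact hvD (hδD v (Walk.fst_mem_support_of_mem_edges δ he))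
          · rw [Walk.edges_reverse, List.mem_reverse] at he
            exact hzQ (Walk.snd_mem_support_of_mem_edges Q he)
        refine ⟨v, _, hcyc, ?_, Walk.start_mem_support _⟩
        rw [Walk.support_cons, List.mem_cons]
        right
        rw [Walk.mem_support_append_iff]
        exact Or.inl huδ
      rcases hδcover u huD with hu1 | hu2
      · exact key δ1 hδ1 hδ1D hu1
      · refine key δ2.reverse hδ2.reverse ?_ ?_
        · intro x hx
          exact hδ2D x (by rwa [Walk.support_reverse, List.mem_reverse] at hx)
        · rwa [Walk.support_reverse, List.mem_reverse]

end StmtAux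
/-- If a 2-connected graph with `S ≠ ∅` contains no even `S`-cycle, then every cycle of
`G` containing a vertex of `S` contains every vertex of `S`. -/
theorem stmt17 {V : Type*} [Fintype V] (G : SimpleGraph V)
    (hG : TwoConnected G) (S : Set V) (hS : S.Nonempty)
    (h : ¬ ∃ (a : V) (c : G.Walk a a), c.IsCycle ∧ Even c.length ∧ ∃ w ∈ S, w ∈ c.support) :
    ∀ (a : V) (c : G.Walk a a), c.IsCycle → (∃ w ∈ S, w ∈ c.support) →
      ∀ w ∈ S, w ∈ c.support := by
  classical
  obtain ⟨hcard, hconn, h2⟩ := hG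
  intro a c hc hex w hwS
  by_contra hw
  obtain ⟨s, hsS, hs⟩ := hex
  have hodd : ¬ Even c.length := fun he => h ⟨a, c, hc, he, s, hsS, hs⟩
  have hws : w ≠ s := fun h' => hw (h' ▸ hs)
  obtain ⟨b, D0, hD0, hwD0, hsD0⟩ := StmtAux.cycle_through_pair hconn h2 hcard w s hws
  have hD0len : 1 ≤ D0.length := by have := hD0.three_le_length; omega
  set D := D0.rotate w hwD0 with hDdef
  have hD : D.IsCycle := hD0.rotate hwD0
  have hsD : s ∈ D.support := (StmtAux.mem_rotate_support hD0len hwD0).mpr hsD0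
  set T : Set V := {x | x ∈ c.support} with hTdef
  have hwT : w ∉ T := hw
  obtain ⟨q, Y1, Y2, hDsplit, hqC, hY2⟩ := StmtAux.exists_lastHit D T ⟨s, hsD, hs⟩
  obtain ⟨p, A, M, hY1split, hpC, hA⟩ :=
    StmtAux.exists_firstHit Y1 T ⟨q, Y1.end_mem_support, hqC⟩
  have hD2 : D = A.append (M.append Y2) := by rw [hDsplit, hY1split, Walk.append_assoc]
  have hwp : w ≠ p := fun h' => hwT (h' ▸ hpC)
  have hwq : w ≠ q := fun h' => hwT (h' ▸ hqC)
  have hAlen : 1 ≤ A.length := StmtAux.walk_length_pos A hwp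
  have hY2len : 1 ≤ Y2.length := StmtAux.walk_length_pos Y2 hwq.symm
  have hApath : A.IsPath :=
    StmtAux.cycle_prefix_isPath hD hD2 (by rw [Walk.length_append]; omega)
  have hY2path : Y2.IsPath := StmtAux.cycle_suffix_isPath hD hDsplit (by
    have := congrArg Walk.length hY1split
    rw [Walk.length_append] at this
    omega)
  have htail : D.support.tail = A.support.tail ++ (M.support.tail ++ Y2.support.tail) := by
    rw [hD2, Walk.tail_support_append, Walk.tail_support_append]
  have hnd : (A.support.tail ++ (M.support.tail ++ Y2.support.tail)).Nodup := by
    rw [← htail]; exact hD.support_nodup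
  have hdisj := List.disjoint_of_nodup_append hnd
  have hAY : ∀ x, x ∈ A.support → x ∈ Y2.support → x = w ∨ (x = p ∧ x = q) := by
    intro x hxA hxY
    by_cases hxw : x = w
    · exact Or.inl hxw
    have hxA' : x ∈ A.support.tail := by
      have hh : x = w ∨ x ∈ A.support.tail := by
        rwa [Walk.support_eq_cons A, List.mem_cons] at hxA
      rcases hh with h' | h'
      · exact absurd h' hxw
      · exact h'
    have hxY' : x = q ∨ x ∈ Y2.support.tail := by
      rwa [Walk.support_eq_cons Y2, List.mem_cons] at hxY
    rcases hxY' with rfl | hxY'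
    · exact Or.inr ⟨hA x hxA hqC, rfl⟩
    · exact (hdisj hxA' (List.mem_append_right _ hxY')).elim
  have hAC : ∀ x ∈ A.support, x ∈ c.support → x = p := fun x hx hx' => hA x hx hx'
  have hBC : ∀ x ∈ Y2.reverse.support, x ∈ c.support → x = q := fun x hx hx' =>
    hY2 x (by rwa [Walk.support_reverse, List.mem_reverse] at hx) hx'
  by_cases hpq : p = q
  · -- single-hit case
    subst hpq
    have hMlen : M.length = 0 := by
      by_contra hM
      have hM1 : 1 ≤ M.length := by omega
      have hpM : p ∈ M.support.tail := StmtAux.end_mem_support_tail M hM1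
      have hpA : p ∈ A.support.tail := StmtAux.end_mem_support_tail A hAlen
      exact hdisj hpA (List.mem_append_left _ hpM)
    have hMnil : M = Walk.nil := Walk.nil_iff_eq_nil.mp (Walk.length_eq_zero_iff.mp hMlen)
    have hD3 : D = A.append Y2 := by rw [hD2, hMnil, Walk.nil_append]
    have hDC : ∀ x ∈ D.support, x ∈ T → x = p := by
      intro x hx hxT
      rw [hD3, Walk.mem_support_append_iff] at hx
      rcases hx with hx | hx
      · exact hA x hx hxT
      · exact hY2 x hx hxT
    have hBpath : Y2.reverse.IsPath := hY2path.reverse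
    have hBsup : ∀ x : V, x ∈ Y2.reverse.support ↔ x ∈ Y2.support := by
      intro x; rw [Walk.support_reverse, List.mem_reverse]
    have hAB : ∀ x, x ∈ A.support → x ∈ Y2.reverse.support → x = w ∨ x = p := by
      intro x hxA hxB
      rcases hAY x hxA ((hBsup x).mp hxB) with h' | ⟨h', -⟩
      · exact Or.inl h'
      · exact Or.inr h'
    obtain ⟨c₀, hc₀C, hc₀p⟩ := StmtAux.exists_other_on_cycle hc p
    obtain ⟨F0, hF0, hpF0⟩ := StmtAux.exists_path_avoiding h2 hwp hc₀p (u := w) (v := c₀)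
    obtain ⟨f, F1, F2, hFsplit, hfAB, hF2⟩ :=
      StmtAux.exists_lastHit F0 {x | x ∈ A.support ∨ x ∈ Y2.reverse.support}
        ⟨w, F0.start_mem_support, Or.inl A.start_mem_support⟩
    have hF2path : F2.IsPath := Walk.IsPath.of_append_right (hFsplit ▸ hF0)
    have hF2sub : ∀ x ∈ F2.support, x ∈ F0.support := by
      intro x hx
      rw [hFsplit]
      exact Walk.subset_support_append_right _ _ hx
    have hpF2 : p ∉ F2.support := fun hx => hpF0 (hF2sub p hx)
    obtain ⟨g, F3, F4, hF2split, hgC, hF3⟩ :=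
      StmtAux.exists_firstHit F2 T ⟨c₀, F2.end_mem_support, hc₀C⟩
    have hF3path : F3.IsPath := Walk.IsPath.of_append_left (hF2split ▸ hF2path)
    have hF3sub : ∀ x ∈ F3.support, x ∈ F2.support := by
      intro x hx
      rw [hF2split]
      exact Walk.subset_support_append_left _ _ hx
    have hgp : g ≠ p := fun h' => hpF2 (h' ▸ hF3sub g F3.end_mem_support)
    have hfp : f ≠ p := fun h' => hpF2 (h' ▸ F2.start_mem_support)
    have hF3AB : ∀ x ∈ F3.support, (x ∈ A.support ∨ x ∈ Y2.reverse.support) → x = f :=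
      fun x hx hx' => hF2 x (hF3sub x hx) hx'
    have hFC : ∀ x ∈ F3.support, x ∈ c.support → x = g := fun x hx hx' => hF3 x hx hx'
    rcases hfAB with hfA | hfB
    · obtain ⟨Z, hZ, hZe⟩ := StmtAux.build_even_single hc hodd hApath hBpath hAC hBC hAB
        hwT hpC hgC hgp hF3path hfA hfp hFC
        (fun x hx hx' => hF3AB x hx (Or.inl hx'))
        (fun x hx hx' => hF3AB x hx (Or.inr hx'))
      exact h ⟨w, Z, hZ, hZe, w, hwS, Z.start_mem_support⟩
    · obtain ⟨Z, hZ, hZe⟩ := StmtAux.build_even_single hc hodd hBpath hApath hBC hAC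
        (fun x hxB hxA => hAB x hxA hxB)
        hwT hpC hgC hgp hF3path hfB hfp hFC
        (fun x hx hx' => hF3AB x hx (Or.inr hx'))
        (fun x hx hx' => hF3AB x hx (Or.inl hx'))
      exact h ⟨w, Z, hZ, hZe, w, hwS, Z.start_mem_support⟩
  · -- fan case
    have hABfan : ∀ x, x ∈ A.support → x ∈ Y2.reverse.support → x = w := by
      intro x hxA hxB
      rcases hAY x hxA (by rwa [Walk.support_reverse, List.mem_reverse] at hxB) with h' | ⟨h1, h2⟩
      · exact h'
      · exact absurd (h1.symm.trans h2) hpq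
    obtain ⟨Z, hZ, hZe⟩ := StmtAux.build_even_fan hc hodd hApath hY2path.reverse hAC hBC
      hABfan hwT hpC hqC hpq
    exact h ⟨w, Z, hZ, hZe, w, hwS, Z.start_mem_support⟩
end
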